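/- Let f be an excursion and ε > 0. Then d_T[f] = d_T[f − Jf] = d_cl[f − Jf], where d_cl is the classical tree pseudo-distance; d_L[f] = d_L[Jf]; and for all s,t ∈ [0,1], d_L[J^ε f](s,t) = ∑_{r ∈ [0,1], Δ_r(f) ≥ ε} δ_r(x_r^s(f), x_r^t(f)), where δ_r is taken with respect to f. -/

import Mathlib

open Set Filter Topology
open scoped Classical

noncomputable section

/-- Left limit of `f` at `t`, with the convention `f(0−) = 0`. -/
def lm (f : ℝ → ℝ) (t : ℝ) : ℝ := if t = 0 then 0 else Function.leftLim f t

/-- The jump `Δ_t(f) = f t − f(t−)`. -/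
def jump (f : ℝ → ℝ) (t : ℝ) : ℝ := f t - lm f t

/-- `inf_{[s,t]} f`. -/
def infIcc (f : ℝ → ℝ) (s t : ℝ) : ℝ := sInf (f '' Icc s t)

/-- An excursion: a càdlàg function on `[0,1]`, nonnegative, vanishing at `1` (and
extended by `0` outside `[0,1]`), all of whose jumps are nonnegative. -/
structure IsExcursion (f : ℝ → ℝ) : Prop where
  nonneg : ∀ t ∈ Icc (0:ℝ) 1, 0 ≤ f t
  zero_outside : ∀ t, t ∉ Icc (0:ℝ) 1 → f t = 0
  rightCont : ∀ t ∈ Ico (0:ℝ) 1, Tendsto f (𝓝[>] t) (𝓝 (f t))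
  leftLimEx : ∀ t ∈ Ioc (0:ℝ) 1, Tendsto f (𝓝[<] t) (𝓝 (Function.leftLim f t))
  one : f 1 = 0
  jump_nonneg : ∀ t ∈ Icc (0:ℝ) 1, 0 ≤ jump f t

/-- The genealogical relation `s ⪯_f t` : `s ≤ t` and `f(s−) ≤ inf_{[s,t]} f`. -/
def pre (f : ℝ → ℝ) (s t : ℝ) : Prop := s ≤ t ∧ lm f s ≤ infIcc f s t

/-- `x_s^t(f) = 1_{s ≤ t} · max(inf_{[s,t]} f − f(s−), 0)`. -/
def xst (f : ℝ → ℝ) (s t : ℝ) : ℝ := if s ≤ t then max (infIcc f s t - lm f s) 0 else 0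

/-- The most recent common ancestor `s ∧_f t`. -/
def mrca (f : ℝ → ℝ) (s t : ℝ) : ℝ := sSup {r : ℝ | 0 ≤ r ∧ pre f r s ∧ pre f r t}

/-- `δ_t(a,b) = min(|a−b|, Δ_t(f) − |a−b|)`, the circle pseudo-distance on `[0, Δ_t(f)]`. -/
def cdel (f : ℝ → ℝ) (t a b : ℝ) : ℝ := min |a - b| (jump f t - |a - b|)

/-- `d_O(s,t) = ∑_{s ≺_f r ⪯_f t} δ_r(0, x_r^t)`. -/
def dO (f : ℝ → ℝ) (s t : ℝ) : ℝ :=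
  ∑' r : ℝ, if pre f s r ∧ s < r ∧ pre f r t then cdel f r 0 (xst f r t) else 0

/-- `d_T(s,t) = f t − inf_{[s,t]} f − ∑_{s ≺_f r ⪯_f t} x_r^t`, intended for `s ⪯_f t`. -/
def dTanc (f : ℝ → ℝ) (s t : ℝ) : ℝ :=
  f t - infIcc f s t - ∑' r : ℝ, if pre f s r ∧ s < r ∧ pre f r t then xst f r t else 0

/-- The looptree pseudo-distance `d_L[f]`. -/
def dL (f : ℝ → ℝ) (s t : ℝ) : ℝ :=
  cdel f (mrca f s t) (xst f (mrca f s t) s) (xst f (mrca f s t) t)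
    + dO f (mrca f s t) s + dO f (mrca f s t) t

/-- The tree pseudo-distance `d_T[f]`. -/
def dT (f : ℝ → ℝ) (s t : ℝ) : ℝ := dTanc f (mrca f s t) s + dTanc f (mrca f s t) t

/-- The vernation pseudo-distance `d_V[f] = d_T[f] + 2·d_L[f]`. -/
def dV (f : ℝ → ℝ) (s t : ℝ) : ℝ := dT f s t + 2 * dL f s t

/-- `Jf(t) = ∑_{r ⪯_f t} x_r^t(f)`. -/
def Jop (f : ℝ → ℝ) (t : ℝ) : ℝ := ∑' r : ℝ, if pre f r t then xst f r t else 0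

/-- `J^ε f(t) = ∑_{r ⪯_f t, Δ_r(f) ≥ ε} x_r^t(f)`. -/
def Jeps (f : ℝ → ℝ) (ε : ℝ) (t : ℝ) : ℝ :=
  ∑' r : ℝ, if pre f r t ∧ ε ≤ jump f r then xst f r t else 0

/-- Pure jump growth (PJG) excursion: `f(t) = ∑_{r ⪯_f t} x_r^t(f)` on `[0,1]`. -/
def IsPJG (f : ℝ → ℝ) : Prop := ∀ t ∈ Icc (0:ℝ) 1, f t = Jop f t

/-- An increasing bijection from `[0,1]` onto itself. -/
def IncBij (l : ℝ → ℝ) : Prop :=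
  StrictMonoOn l (Icc (0:ℝ) 1) ∧ Set.BijOn l (Icc (0:ℝ) 1) (Icc (0:ℝ) 1)

/-- The Skorokhod distance `ρ` on functions `[0,1] → ℝ`. -/
def skor (f g : ℝ → ℝ) : ℝ :=
  sInf {c : ℝ | 0 ≤ c ∧ ∃ l : ℝ → ℝ, IncBij l ∧
    ∀ x ∈ Icc (0:ℝ) 1, |l x - x| ≤ c ∧ |f x - g (l x)| ≤ c}

/-- The classical tree pseudo-distance `d_cl[g](s,t) = g s + g t − 2·inf_{[s∧t, s∨t]} g`. -/
def dcl (g : ℝ → ℝ) (s t : ℝ) : ℝ := g s + g t - 2 * infIcc g (min s t) (max s t)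

variable {f : ℝ → ℝ}

lemma IsExcursion.nn (hf : IsExcursion f) (t : ℝ) : 0 ≤ f t := by
  by_cases h : t ∈ Icc (0:ℝ) 1
  · exact hf.nonneg t h
  · simp [hf.zero_outside t h]

lemma bddB (hf : IsExcursion f) (s t : ℝ) : BddBelow (f '' Icc s t) :=
  ⟨0, by rintro x ⟨u, -, rfl⟩; exact hf.nn u⟩

lemma infIcc_le (hf : IsExcursion f) {s t u : ℝ} (h : u ∈ Icc s t) : infIcc f s t ≤ f u :=
  csInf_le (bddB hf s t) ⟨u, h, rfl⟩

lemma le_infIcc {c s t : ℝ} (hst : s ≤ t) (h : ∀ u ∈ Icc s t, c ≤ f u) :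
    c ≤ infIcc f s t :=
  le_csInf ((nonempty_Icc.2 hst).image f) (by rintro x ⟨u, hu, rfl⟩; exact h u hu)

lemma infIcc_nonneg (hf : IsExcursion f) (s t : ℝ) : 0 ≤ infIcc f s t := by
  rcases le_or_gt s t with h | h
  · exact le_infIcc h fun u _ => hf.nn u
  · simp [infIcc, Icc_eq_empty_of_lt h, Real.sInf_empty]

lemma infIcc_mono (hf : IsExcursion f) {s t s' t' : ℝ} (hs : s' ≤ s) (ht : t ≤ t') (h : s ≤ t) :
    infIcc f s' t' ≤ infIcc f s t :=
  csInf_le_csInf (bddB hf s' t') ((nonempty_Icc.2 h).image f)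
    (image_mono (Icc_subset_Icc hs ht))

lemma infIcc_self (f : ℝ → ℝ) (t : ℝ) : infIcc f t t = f t := by
  simp [infIcc, Icc_self]

lemma infIcc_split (hf : IsExcursion f) {a b c : ℝ} (h1 : a ≤ c) (h2 : c ≤ b) :
    infIcc f a b = min (infIcc f a c) (infIcc f c b) := by
  have h : Icc a b = Icc a c ∪ Icc c b := (Icc_union_Icc_eq_Icc h1 h2).symm
  rw [infIcc, h, image_union, csInf_union (bddB hf a c) ((nonempty_Icc.2 h1).image f)
    (bddB hf c b) ((nonempty_Icc.2 h2).image f)]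
  rfl

lemma tendsto_lm (hf : IsExcursion f) {t : ℝ} (h0 : 0 < t) (h1 : t ≤ 1) :
    Tendsto f (𝓝[<] t) (𝓝 (lm f t)) := by
  rw [lm, if_neg h0.ne']
  exact hf.leftLimEx t ⟨h0, h1⟩

lemma lm_of_neg (hf : IsExcursion f) {t : ℝ} (ht : t < 0) : lm f t = 0 := by
  rw [lm, if_neg ht.ne]
  apply leftLim_eq_of_tendsto
  apply Tendsto.congr' _ (tendsto_const_nhds (α := ℝ) (x := (0:ℝ)))
  filter_upwards [self_mem_nhdsWithin] with u hu
  exact (hf.zero_outside u (by simp only [mem_Icc, not_and_or, not_le]; left; exact (mem_Iio.1 hu).trans ht)).symm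

lemma lm_of_gt_one (hf : IsExcursion f) {t : ℝ} (ht : 1 < t) : lm f t = 0 := by
  rw [lm, if_neg (by linarith)]
  apply leftLim_eq_of_tendsto
  apply Tendsto.congr' _ (tendsto_const_nhds (α := ℝ) (x := (0:ℝ)))
  filter_upwards [Ioo_mem_nhdsLT_of_mem ⟨ht, le_rfl⟩] with u hu
  exact (hf.zero_outside u (by simp only [mem_Icc, not_and_or, not_le]; right; exact hu.1)).symm

lemma lm_one (hf : IsExcursion f) : lm f 1 = 0 := by
  have h := tendsto_lm hf one_pos le_rfl
  have h1 : 0 ≤ lm f 1 := ge_of_tendsto h (Eventually.of_forall fun u => hf.nn u)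
  have h2 := hf.jump_nonneg 1 ⟨zero_le_one, le_rfl⟩
  rw [jump, hf.one] at h2; linarith

lemma lm_nonneg (hf : IsExcursion f) (t : ℝ) : 0 ≤ lm f t := by
  rcases lt_trichotomy t 0 with h | h | h
  · rw [lm_of_neg hf h]
  · simp [lm, h]
  · rcases le_or_gt t 1 with h1 | h1
    · exact ge_of_tendsto (tendsto_lm hf h h1) (Eventually.of_forall fun u => hf.nn u)
    · rw [lm_of_gt_one hf h1]

lemma lm_le_self (hf : IsExcursion f) (t : ℝ) : lm f t ≤ f t := by
  rcases lt_trichotomy t 0 with h | h | h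
  · rw [hf.zero_outside t (by simp only [mem_Icc, not_and_or, not_le]; left; exact h),
      lm_of_neg hf h]
  · subst h; simp only [lm, if_pos rfl]; exact hf.nn 0
  · rcases le_or_gt t 1 with h1 | h1
    · have := hf.jump_nonneg t ⟨h.le, h1⟩; rw [jump] at this; linarith
    · rw [hf.zero_outside t (by simp only [mem_Icc, not_and_or, not_le]; right; exact h1),
        lm_of_gt_one hf h1]

lemma infIcc_le_lm (hf : IsExcursion f) {a c : ℝ} (hac : a < c) (hc : c ≤ 1) :
    infIcc f a c ≤ lm f c := by
  rcases le_or_gt c 0 with h0 | h0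
  · have hfa : f a = 0 := hf.zero_outside a (by simp only [mem_Icc, not_and_or, not_le]; left; linarith)
    have : infIcc f a c ≤ 0 := le_of_le_of_eq (infIcc_le hf ⟨le_rfl, hac.le⟩) hfa
    rcases eq_or_lt_of_le h0 with h | h
    · simpa [lm, h] using this
    · rw [lm_of_neg hf h]; exact this
  · exact ge_of_tendsto (tendsto_lm hf h0 hc)
      (Filter.eventually_of_mem (Ioo_mem_nhdsLT_of_mem ⟨hac, le_rfl⟩)
        (fun u hu => infIcc_le hf ⟨hu.1.le, hu.2.le⟩))

lemma lm_left_approx (hf : IsExcursion f) {c : ℝ} (h0 : 0 < c) (h1 : c ≤ 1) {ε : ℝ} (hε : 0 < ε) :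
    ∃ δ > 0, δ ≤ c ∧ ∀ u, c - δ < u → u < c → |f u - lm f c| ≤ ε ∧ |lm f u - lm f c| ≤ ε := by
  have h := tendsto_lm hf h0 h1
  rw [Metric.tendsto_nhdsWithin_nhds] at h
  obtain ⟨δ, hδ, hd⟩ := h (ε/2) (by linarith)
  refine ⟨min δ c, lt_min hδ h0, min_le_right _ _, fun u hu1 hu2 => ?_⟩
  have hu0 : 0 < u := lt_of_le_of_lt (by simp) hu1
  have key : ∀ v, c - min δ c < v → v < c → |f v - lm f c| ≤ ε/2 := by
    intro v hv1 hv2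
    have hd1 : dist v c < δ := by
      rw [Real.dist_eq, abs_of_nonpos (by linarith)]
      have := min_le_left δ c; linarith
    exact (hd (mem_Iio.2 hv2) hd1).le
  have hfu := key u hu1 hu2
  refine ⟨le_trans hfu (by linarith), ?_⟩
  have hul : Tendsto f (𝓝[<] u) (𝓝 (lm f u)) := tendsto_lm hf hu0 (by linarith)
  have hev : ∀ᶠ v in 𝓝[<] u, |f v - lm f c| ≤ ε/2 :=
    Filter.eventually_of_mem (Ioo_mem_nhdsLT_of_mem ⟨hu1, le_rfl⟩)
      (fun v hv => key v hv.1 (hv.2.trans hu2))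
  rw [abs_le]
  constructor
  · have hge : lm f c - ε/2 ≤ lm f u :=
      ge_of_tendsto hul (hev.mono fun v hv => by have := (abs_le.1 hv).1; linarith)
    linarith
  · have hle : lm f u ≤ lm f c + ε/2 :=
      le_of_tendsto hul (hev.mono fun v hv => by have := (abs_le.1 hv).2; linarith)
    linarith


lemma jump_nn (hf : IsExcursion f) (s : ℝ) : 0 ≤ jump f s := by
  have := lm_le_self hf s; rw [jump]; linarith

lemma pre_refl (hf : IsExcursion f) {t : ℝ} : pre f t t :=
  ⟨le_rfl, by rw [infIcc_self]; exact lm_le_self hf t⟩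

lemma pre_zero (hf : IsExcursion f) {t : ℝ} (ht : 0 ≤ t) : pre f 0 t :=
  ⟨ht, by rw [lm, if_pos rfl]; exact infIcc_nonneg hf 0 t⟩

lemma pre_mono_right (hf : IsExcursion f) {r t u : ℝ} (h : pre f r t) (hru : r ≤ u)
    (hut : u ≤ t) : pre f r u :=
  ⟨hru, h.2.trans (infIcc_mono hf le_rfl hut hru)⟩

lemma pre_chain (hf : IsExcursion f) {r r' t : ℝ} (h : pre f r t) (h' : pre f r' t)
    (hrr' : r ≤ r') : pre f r r' :=
  ⟨hrr', h.2.trans (infIcc_mono hf le_rfl h'.1 hrr')⟩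

lemma pre_trans (hf : IsExcursion f) {r s t : ℝ} (h1 : pre f r s) (h2 : pre f s t)
    (hs1 : s ≤ 1) : pre f r t := by
  rcases eq_or_lt_of_le h1.1 with rfl | hrs
  · exact h2
  · refine ⟨h1.1.trans h2.1, ?_⟩
    rw [infIcc_split hf h1.1 h2.1]
    exact le_min h1.2 (h1.2.trans ((infIcc_le_lm hf hrs hs1).trans h2.2))

lemma xst_nonneg (f : ℝ → ℝ) (s t : ℝ) : 0 ≤ xst f s t := by
  rw [xst]; split
  · exact le_max_right _ _
  · exact le_rfl

lemma xst_of_pre (hf : IsExcursion f) {s t : ℝ} (h : pre f s t) :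
    xst f s t = infIcc f s t - lm f s := by
  rw [xst, if_pos h.1, max_eq_left (by linarith [h.2])]

lemma xst_of_not_le {s t : ℝ} (h : ¬ s ≤ t) : xst f s t = 0 := by rw [xst, if_neg h]

lemma xst_of_neg (hf : IsExcursion f) {s t : ℝ} (hs : s < 0) : xst f s t = 0 := by
  rw [xst]; split
  · rename_i h
    rw [lm_of_neg hf hs, max_eq_right]
    have h1 : infIcc f s t ≤ f s := infIcc_le hf ⟨le_rfl, h⟩
    have h2 : f s = 0 := hf.zero_outside s (by simp only [mem_Icc, not_and_or, not_le]; left; exact hs)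
    linarith
  · rfl

lemma xst_of_gt_one (hf : IsExcursion f) {s t : ℝ} (hs : 1 < s) : xst f s t = 0 := by
  rw [xst]; split
  · rename_i h
    rw [lm_of_gt_one hf hs, max_eq_right]
    have h1 : infIcc f s t ≤ f s := infIcc_le hf ⟨le_rfl, h⟩
    have h2 : f s = 0 := hf.zero_outside s (by simp only [mem_Icc, not_and_or, not_le]; right; exact hs)
    linarith
  · rfl

lemma xst_le_jump (hf : IsExcursion f) (s t : ℝ) : xst f s t ≤ jump f s := by
  by_cases h : s ≤ t
  · rcases lt_or_ge s 0 with hs | hs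
    · rw [xst_of_neg hf hs]; exact jump_nn hf s
    · rcases le_or_gt s 1 with hs1 | hs1
      · rw [xst, if_pos h, jump]
        refine max_le (by linarith [infIcc_le hf (⟨le_rfl, h⟩ : s ∈ Icc s t)]) ?_
        have := jump_nn hf s; rw [jump] at this; linarith
      · rw [xst_of_gt_one hf hs1]; exact jump_nn hf s
  · rw [xst_of_not_le h]; exact jump_nn hf s

lemma xst_zero_left (hf : IsExcursion f) {t : ℝ} (ht : 0 ≤ t) :
    xst f 0 t = infIcc f 0 t := by
  rw [xst, if_pos ht, lm, if_pos rfl, sub_zero, max_eq_left (infIcc_nonneg hf 0 t)]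

lemma sSup_pre (hf : IsExcursion f) {A : Set ℝ} {s : ℝ} (hs1 : s ≤ 1)
    (hne : A.Nonempty) (hA : ∀ r ∈ A, 0 ≤ r ∧ pre f r s) : pre f (sSup A) s := by
  have hbdd : BddAbove A := ⟨s, fun r hr => (hA r hr).2.1⟩
  set m := sSup A with hm
  have hms : m ≤ s := csSup_le hne fun r hr => (hA r hr).2.1
  have hm0 : 0 ≤ m := le_csSup hbdd hne.choose_spec |>.trans' (hA _ hne.choose_spec).1
  refine ⟨hms, ?_⟩
  rcases eq_or_lt_of_le hm0 with h0 | h0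
  · rw [← h0, lm, if_pos rfl]
    exact infIcc_nonneg hf 0 s
  · apply le_of_forall_pos_le_add
    intro ε hε
    obtain ⟨δ, hδ, hδm, happ⟩ := lm_left_approx hf h0 (hms.trans hs1) hε
    obtain ⟨r, hr, hrm⟩ := exists_lt_of_lt_csSup hne (by linarith : m - δ < m)
    have hrle : r ≤ m := le_csSup hbdd hr
    rcases eq_or_lt_of_le hrle with heq | hrlt
    · have h5 : lm f m ≤ infIcc f m s := heq ▸ (hA r hr).2.2
      linarith
    · have h2 := (happ r hrm hrlt).2
      have h3 : lm f r ≤ infIcc f r s := (hA r hr).2.2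
      have h4 : infIcc f r s ≤ infIcc f m s := by
        exact infIcc_mono hf hrle le_rfl hms
      have := abs_le.1 h2
      linarith


lemma mrca_nonempty (hf : IsExcursion f) {s t : ℝ} (hs : s ∈ Icc (0:ℝ) 1)
    (ht : t ∈ Icc (0:ℝ) 1) : {r : ℝ | 0 ≤ r ∧ pre f r s ∧ pre f r t}.Nonempty :=
  ⟨0, le_rfl, pre_zero hf hs.1, pre_zero hf ht.1⟩

lemma mrca_bdd {s t : ℝ} : BddAbove {r : ℝ | 0 ≤ r ∧ pre f r s ∧ pre f r t} :=
  ⟨s, fun r hr => hr.2.1.1⟩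

lemma mrca_nonneg (hf : IsExcursion f) {s t : ℝ} (hs : s ∈ Icc (0:ℝ) 1)
    (ht : t ∈ Icc (0:ℝ) 1) : 0 ≤ mrca f s t :=
  le_csSup mrca_bdd (mrca_nonempty hf hs ht).choose_spec |>.trans'
    (mrca_nonempty hf hs ht).choose_spec.1 |>.trans_eq' rfl |>.trans_eq rfl

lemma mrca_le_left (hf : IsExcursion f) {s t : ℝ} (hs : s ∈ Icc (0:ℝ) 1)
    (ht : t ∈ Icc (0:ℝ) 1) : mrca f s t ≤ s :=
  csSup_le (mrca_nonempty hf hs ht) fun r hr => hr.2.1.1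

lemma mrca_le_right (hf : IsExcursion f) {s t : ℝ} (hs : s ∈ Icc (0:ℝ) 1)
    (ht : t ∈ Icc (0:ℝ) 1) : mrca f s t ≤ t :=
  csSup_le (mrca_nonempty hf hs ht) fun r hr => hr.2.2.1

lemma mrca_pre_left (hf : IsExcursion f) {s t : ℝ} (hs : s ∈ Icc (0:ℝ) 1)
    (ht : t ∈ Icc (0:ℝ) 1) : pre f (mrca f s t) s :=
  sSup_pre hf hs.2 (mrca_nonempty hf hs ht) fun r hr => ⟨hr.1, hr.2.1⟩

lemma mrca_pre_right (hf : IsExcursion f) {s t : ℝ} (hs : s ∈ Icc (0:ℝ) 1)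
    (ht : t ∈ Icc (0:ℝ) 1) : pre f (mrca f s t) t :=
  sSup_pre hf ht.2 (mrca_nonempty hf hs ht) fun r hr => ⟨hr.1, hr.2.2⟩

lemma le_mrca {s t r : ℝ} (h0 : 0 ≤ r) (h1 : pre f r s) (h2 : pre f r t) :
    r ≤ mrca f s t := le_csSup mrca_bdd ⟨h0, h1, h2⟩

lemma mrca_comm (f : ℝ → ℝ) (s t : ℝ) : mrca f s t = mrca f t s := by
  rw [mrca, mrca]
  congr 1
  ext r
  exact ⟨fun h => ⟨h.1, h.2.2, h.2.1⟩, fun h => ⟨h.1, h.2.2, h.2.1⟩⟩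

lemma chain_aux (hf : IsExcursion f) {v b : ℝ} (hb : b ≤ 1) :
    ∀ (R : Finset ℝ), (∀ r ∈ R, v < r ∧ r ≤ b ∧ lm f r ≤ infIcc f r b) →
      ∀ a, a ≤ b → v < a → a ≤ 1 → (∀ r ∈ R, r < a) →
      (∑ r ∈ R, xst f r b) + infIcc f v b ≤ lm f a := by
  intro R
  induction R using Finset.induction_on_max with
  | empty =>
    intro _ a hab hva ha1 _
    simp only [Finset.sum_empty, zero_add]
    exact (infIcc_mono hf le_rfl hab hva.le).trans (infIcc_le_lm hf hva ha1)
  | insert a' S hmax IH =>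
    intro hmem a hab hva ha1 hlt
    have ha'notin : a' ∉ S := fun h => lt_irrefl _ (hmax a' h)
    rw [Finset.sum_insert ha'notin]
    have ha' := hmem a' (Finset.mem_insert_self _ _)
    have IH' := IH (fun r hr => hmem r (Finset.mem_insert_of_mem hr)) a' ha'.2.1 ha'.1
      (ha'.2.1.trans hb) hmax
    have hx : xst f a' b = infIcc f a' b - lm f a' := by
      rw [xst, if_pos ha'.2.1, max_eq_left (by linarith [ha'.2.2])]
    have hlt' : a' < a := hlt a' (Finset.mem_insert_self _ _)
    have h5 : infIcc f a' b ≤ infIcc f a' a := infIcc_mono hf le_rfl hab hlt'.le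
    have h6 : infIcc f a' a ≤ lm f a := infIcc_le_lm hf hlt' ha1
    linarith

lemma chain_bound (hf : IsExcursion f) {v b : ℝ} (hv : 0 ≤ v) (hb : b ≤ 1) (hvb : v ≤ b)
    (R : Finset ℝ) (hR : ∀ r ∈ R, v < r ∧ r ≤ b) :
    (∑ r ∈ R, xst f r b) + infIcc f v b ≤ f b := by
  classical
  have hsum : ∑ r ∈ R.filter (fun r => lm f r ≤ infIcc f r b), xst f r b
      = ∑ r ∈ R, xst f r b := by
    apply Finset.sum_filter_of_ne
    intro r hr hne
    by_contra h
    push_neg at h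
    exact hne (by rw [xst, if_pos (hR r hr).2, max_eq_right (by linarith)])
  rw [← hsum]
  set R' := R.filter (fun r => lm f r ≤ infIcc f r b) with hR'def
  have hR'mem : ∀ r ∈ R', v < r ∧ r ≤ b ∧ lm f r ≤ infIcc f r b := by
    intro r hr
    rw [hR'def, Finset.mem_filter] at hr
    exact ⟨(hR r hr.1).1, (hR r hr.1).2, hr.2⟩
  rcases R'.eq_empty_or_nonempty with he | hne
  · rw [he]
    simp only [Finset.sum_empty, zero_add]
    exact infIcc_le hf ⟨hvb, le_rfl⟩
  · set m := R'.max' hne with hm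
    have hmmem := R'.max'_mem hne
    have hmm := hR'mem m hmmem
    rw [← Finset.sum_erase_add R' _ hmmem]
    have haux := chain_aux hf hb (R'.erase m)
      (fun r hr => hR'mem r (Finset.mem_of_mem_erase hr)) m hmm.2.1 hmm.1
      (hmm.2.1.trans hb) (fun r hr => Finset.lt_max'_of_mem_erase_max' _ hne hr)
    have hx : xst f m b = infIcc f m b - lm f m := by
      rw [xst, if_pos hmm.2.1, max_eq_left (by linarith [hmm.2.2])]
    have h7 : infIcc f m b ≤ f b := infIcc_le hf ⟨hmm.2.1, le_rfl⟩
    linarith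

lemma sum_J_le (hf : IsExcursion f) {t : ℝ} (ht : t ∈ Icc (0:ℝ) 1) (R : Finset ℝ) :
    ∑ r ∈ R, (if pre f r t then xst f r t else 0) ≤ f t := by
  classical
  have h1 : ∀ r ∈ R, (if pre f r t then xst f r t else 0) ≤
      (if r = 0 then infIcc f 0 t else 0) + (if 0 < r ∧ pre f r t then xst f r t else 0) := by
    intro r _
    by_cases hp : pre f r t
    · rw [if_pos hp]
      rcases lt_trichotomy r 0 with h | h | h
      · rw [xst_of_neg hf h, if_neg (by intro h'; subst h'; exact lt_irrefl _ h),
          if_neg (by rintro ⟨h', -⟩; linarith)]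
        simp
      · subst h
        rw [if_pos rfl, if_neg (by rintro ⟨h', -⟩; exact lt_irrefl _ h'), xst_zero_left hf ht.1]
        simp
      · rw [if_neg (by intro h'; subst h'; exact lt_irrefl _ h), if_pos ⟨h, hp⟩]
        simp
    · rw [if_neg hp]
      have h2 : (if 0 < r ∧ pre f r t then xst f r t else 0) = 0 :=
        if_neg (by rintro ⟨-, h'⟩; exact hp h')
      rw [h2]
      split
      · simp [infIcc_nonneg hf]
      · simp
  calc ∑ r ∈ R, (if pre f r t then xst f r t else 0)
      ≤ ∑ r ∈ R, ((if r = 0 then infIcc f 0 t else 0)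
          + (if 0 < r ∧ pre f r t then xst f r t else 0)) := Finset.sum_le_sum h1
    _ = (∑ r ∈ R, if r = 0 then infIcc f 0 t else 0)
          + ∑ r ∈ R, (if 0 < r ∧ pre f r t then xst f r t else 0) := Finset.sum_add_distrib
    _ ≤ infIcc f 0 t + ((∑ r ∈ R.filter (fun r => 0 < r ∧ pre f r t), xst f r t)) := by
        apply add_le_add
        · rw [Finset.sum_ite_eq' R (0:ℝ) (fun _ => infIcc f 0 t)]
          split
          · exact le_rfl
          · exact infIcc_nonneg hf 0 t
        · rw [Finset.sum_filter]
    _ ≤ f t := by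
        have := chain_bound hf le_rfl ht.2 ht.1 (R.filter (fun r => 0 < r ∧ pre f r t))
          (fun r hr => by
            rw [Finset.mem_filter] at hr
            exact ⟨hr.2.1, hr.2.2.1⟩)
        linarith

lemma summable_J (hf : IsExcursion f) {t : ℝ} (ht : t ∈ Icc (0:ℝ) 1) :
    Summable (fun r => if pre f r t then xst f r t else 0) :=
  summable_of_sum_le (fun r => by
    by_cases h : pre f r t
    · simp only [if_pos h]; exact xst_nonneg f r t
    · simp only [if_neg h]; exact le_rfl)
    (sum_J_le hf ht)

lemma Jop_le (hf : IsExcursion f) {t : ℝ} (ht : t ∈ Icc (0:ℝ) 1) : Jop f t ≤ f t :=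
  Summable.tsum_le_of_sum_le (summable_J hf ht) (sum_J_le hf ht)

lemma Jop_nonneg (hf : IsExcursion f) (t : ℝ) : 0 ≤ Jop f t :=
  tsum_nonneg fun r => by
    by_cases h : pre f r t
    · simp only [if_pos h]; exact xst_nonneg f r t
    · simp only [if_neg h]; exact le_rfl

lemma xst_self (hf : IsExcursion f) {m : ℝ} : xst f m m = jump f m := by
  rw [xst, if_pos le_rfl, infIcc_self, jump, max_eq_left]
  have := lm_le_self hf m; linarith

/-- The sum appearing in `dTanc`. -/
def preSum (f : ℝ → ℝ) (m s : ℝ) : ℝ :=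
  ∑' r : ℝ, if pre f m r ∧ m < r ∧ pre f r s then xst f r s else 0

lemma dTanc_eq (f : ℝ → ℝ) (m s : ℝ) : dTanc f m s = f s - infIcc f m s - preSum f m s := rfl

lemma preSum_nonneg (f : ℝ → ℝ) (m s : ℝ) : 0 ≤ preSum f m s :=
  tsum_nonneg fun r => by
    by_cases h : pre f m r ∧ m < r ∧ pre f r s
    · simp only [if_pos h]; exact xst_nonneg f r s
    · simp only [if_neg h]; exact le_rfl

lemma summable_preSum (hf : IsExcursion f) {s : ℝ} (hs : s ∈ Icc (0:ℝ) 1) (m : ℝ) :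
    Summable (fun r => if pre f m r ∧ m < r ∧ pre f r s then xst f r s else 0) := by
  apply Summable.of_nonneg_of_le _ _ (summable_J hf hs)
  · intro r
    by_cases h : pre f m r ∧ m < r ∧ pre f r s
    · simp only [if_pos h]; exact xst_nonneg f r s
    · simp only [if_neg h]; exact le_rfl
  · intro r
    by_cases h : pre f m r ∧ m < r ∧ pre f r s
    · simp only [if_pos h, if_pos h.2.2]; exact le_rfl
    · simp only [if_neg h]
      by_cases h' : pre f r s
      · simp only [if_pos h']; exact xst_nonneg f r s
      · simp only [if_neg h']; exact le_rfl

lemma summand_eq (hf : IsExcursion f) {m s : ℝ} (hm : m ∈ Icc (0:ℝ) 1)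
    (hs : s ∈ Icc (0:ℝ) 1) (hms : pre f m s) (r : ℝ) :
    (if pre f r s then xst f r s else 0) + (if r = m then jump f m else 0)
      = ((if pre f r m then xst f r m else 0) + (if r = m then xst f m s else 0))
        + (if pre f m r ∧ m < r ∧ pre f r s then xst f r s else 0) := by
  by_cases hrm : r = m
  · subst hrm
    rw [if_pos hms, if_pos rfl, if_pos rfl, if_pos (pre_refl hf),
      if_neg (show ¬(pre f r r ∧ r < r ∧ pre f r s) from fun hc => lt_irrefl r hc.2.1),
      xst_self hf]
    ring
  · rw [if_neg hrm, if_neg hrm]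
    rcases lt_or_gt_of_ne hrm with hlt | hgt
    · rw [if_neg (show ¬(pre f m r ∧ m < r ∧ pre f r s) from
        fun hc => absurd hc.1.1 (not_le.2 hlt))]
      by_cases hp : pre f r s
      · have hpm : pre f r m := pre_chain hf hp hms hlt.le
        rw [if_pos hp, if_pos hpm]
        have hinf : infIcc f r s = infIcc f r m := by
          rw [infIcc_split hf hlt.le hms.1]
          exact min_eq_left ((infIcc_le_lm hf hlt hm.2).trans hms.2)
        rw [xst, xst, if_pos hp.1, if_pos hpm.1, hinf]
        ring
      · have hpm : ¬ pre f r m := fun h => hp (pre_trans hf h hms hm.2)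
        rw [if_neg hp, if_neg hpm]
        ring
    · have hpm : ¬ pre f r m := fun h => absurd h.1 (not_le.2 hgt)
      rw [if_neg hpm]
      by_cases hp : pre f r s
      · rw [if_pos hp, if_pos ⟨pre_chain hf hms hp hgt.le, hgt, hp⟩]
        ring
      · rw [if_neg hp, if_neg (show ¬(pre f m r ∧ m < r ∧ pre f r s) from
          fun hc => hp hc.2.2)]
        ring

lemma KI1 (hf : IsExcursion f) {m s : ℝ} (hm : m ∈ Icc (0:ℝ) 1)
    (hs : s ∈ Icc (0:ℝ) 1) (hms : pre f m s) :
    Jop f s + jump f m = Jop f m + xst f m s + preSum f m s := by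
  have hs1 := summable_J hf hs
  have hs2 : Summable (fun r : ℝ => if r = m then jump f m else 0) :=
    (hasSum_ite_eq m (jump f m)).summable
  have hs3 := summable_J hf hm
  have hs4 : Summable (fun r : ℝ => if r = m then xst f m s else 0) :=
    (hasSum_ite_eq m (xst f m s)).summable
  have hs5 := summable_preSum hf hs m
  have h := tsum_congr (L := SummationFilter.unconditional ℝ) (summand_eq hf hm hs hms)
  rw [Summable.tsum_add hs1 hs2, Summable.tsum_add (hs3.add hs4) hs5, Summable.tsum_add hs3 hs4,
    tsum_ite_eq, tsum_ite_eq] at h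
  exact h

lemma inf_eq_lm_add_xst (hf : IsExcursion f) {m s : ℝ} (hms : pre f m s) :
    infIcc f m s = lm f m + xst f m s := by
  rw [xst_of_pre hf hms]; ring

lemma KI2 (hf : IsExcursion f) {m s : ℝ} (hm : m ∈ Icc (0:ℝ) 1)
    (hs : s ∈ Icc (0:ℝ) 1) (hms : pre f m s) :
    dTanc f m s = (f s - Jop f s) - (f m - Jop f m) := by
  have h1 := KI1 hf hm hs hms
  have h2 := inf_eq_lm_add_xst hf hms
  have h3 : jump f m = f m - lm f m := rfl
  rw [dTanc_eq]
  linarith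

lemma preSum_le (hf : IsExcursion f) {m s : ℝ} (hm : 0 ≤ m)
    (hs : s ∈ Icc (0:ℝ) 1) (hms : m ≤ s) :
    preSum f m s ≤ f s - infIcc f m s := by
  apply Summable.tsum_le_of_sum_le (summable_preSum hf hs m)
  intro R
  classical
  have h1 : ∑ r ∈ R, (if pre f m r ∧ m < r ∧ pre f r s then xst f r s else 0)
      = ∑ r ∈ R.filter (fun r => pre f m r ∧ m < r ∧ pre f r s), xst f r s :=
    (Finset.sum_filter _ _).symm
  rw [h1]
  have h2 := chain_bound hf hm hs.2 hms (R.filter (fun r => pre f m r ∧ m < r ∧ pre f r s))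
    (fun r hr => by
      rw [Finset.mem_filter] at hr
      exact ⟨hr.2.2.1, hr.2.2.2.1⟩)
  linarith

lemma dTanc_nonneg (hf : IsExcursion f) {m s : ℝ} (hm : 0 ≤ m)
    (hs : s ∈ Icc (0:ℝ) 1) (hms : m ≤ s) : 0 ≤ dTanc f m s := by
  rw [dTanc_eq]
  have := preSum_le hf hm hs hms
  linarith

lemma g_mono (hf : IsExcursion f) {m s : ℝ} (hm : m ∈ Icc (0:ℝ) 1)
    (hs : s ∈ Icc (0:ℝ) 1) (hms : pre f m s) :
    f m - Jop f m ≤ f s - Jop f s := by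
  have h1 := KI2 hf hm hs hms
  have h2 := dTanc_nonneg hf hm.1 hs hms.1
  linarith

lemma exists_lt_of_infIcc_lt {a b e : ℝ} (hab : a ≤ b) (h : infIcc f a b < e) :
    ∃ u ∈ Icc a b, f u < e := by
  obtain ⟨x, hx, hxe⟩ := exists_lt_of_csInf_lt ((nonempty_Icc.2 hab).image f) h
  obtain ⟨u, hu, rfl⟩ := hx
  exact ⟨u, hu, hxe⟩

lemma last_cross (hf : IsExcursion f) {a b e : ℝ} (ha : 0 ≤ a) (hb : b ≤ 1) (hab : a ≤ b)
    (hne : ∃ u ∈ Icc a b, f u < e) :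
    ∃ u1 ∈ Icc a b, (lm f u1 ≤ e ∧ ∀ v, u1 < v → v ≤ b → e < f v ∧ e < lm f v)
      ∧ ∀ u ∈ Icc a b, min (f u) (lm f u) ≤ e → u ≤ u1 := by
  classical
  set S := {u : ℝ | u ∈ Icc a b ∧ min (f u) (lm f u) ≤ e} with hS
  obtain ⟨u0, hu0, hu0e⟩ := hne
  have hu0S : u0 ∈ S := ⟨hu0, (min_le_left _ _).trans hu0e.le⟩
  have hSne : S.Nonempty := ⟨u0, hu0S⟩
  have hSbdd : BddAbove S := ⟨b, fun u hu => hu.1.2⟩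
  set u1 := sSup S with hu1
  have hu1a : a ≤ u1 := hu0.1.trans (le_csSup hSbdd hu0S)
  have hu1b : u1 ≤ b := csSup_le hSne fun u hu => hu.1.2
  have hafter : ∀ v, u1 < v → v ≤ b → e < f v ∧ e < lm f v := by
    intro v hv hvb
    have hvS : v ∉ S := fun h => absurd (le_csSup hSbdd h) (not_le.2 hv)
    have : ¬ min (f v) (lm f v) ≤ e := fun h => hvS ⟨⟨hu1a.trans hv.le, hvb⟩, h⟩
    push_neg at this
    exact lt_min_iff.1 this
  refine ⟨u1, ⟨hu1a, hu1b⟩, ⟨?_, hafter⟩, fun u hu hue => le_csSup hSbdd ⟨hu, hue⟩⟩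
  by_contra hgt
  push_neg at hgt
  rcases eq_or_lt_of_le (ha.trans hu1a) with h0 | h0
  · rw [← h0, lm, if_pos rfl] at hgt
    have h1 := hf.nn u0
    have h2 := lm_nonneg hf u0
    have := hu0S.2
    rcases le_total (f u0) (lm f u0) with h | h
    · rw [min_eq_left h] at this; linarith
    · rw [min_eq_right h] at this; linarith
  · obtain ⟨δ, hδ, hδc, happ⟩ := lm_left_approx hf h0 (hu1b.trans hb)
      (show (0:ℝ) < (lm f u1 - e)/2 by linarith)
    have hempty : ∀ u ∈ S, u ≤ u1 - δ := by
      intro u hu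
      have hle : u ≤ u1 := le_csSup hSbdd hu
      by_contra hc
      push_neg at hc
      rcases eq_or_lt_of_le hle with heq | hlt
      · have h1 : e < min (f u1) (lm f u1) :=
          lt_min_iff.2 ⟨lt_of_lt_of_le hgt (lm_le_self hf u1), hgt⟩
        rw [heq] at hu
        exact absurd hu.2 (not_le.2 h1)
      · obtain ⟨h1, h2⟩ := happ u hc hlt
        have h3 : e < f u := by
          have := (abs_le.1 h1).1; linarith
        have h4 : e < lm f u := by
          have := (abs_le.1 h2).1; linarith
        exact absurd hu.2 (not_le.2 (lt_min_iff.2 ⟨h3, h4⟩))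
    have := csSup_le hSne hempty
    linarith

lemma lm_eq_inf_of_no_anc (hf : IsExcursion f) {m w : ℝ} (hm0 : 0 ≤ m) (hw1 : w ≤ 1)
    (hmw : m < w) (hnoanc : ∀ r, m < r → r < w → ¬ pre f r w) :
    lm f w = infIcc f m w := by
  have hle : infIcc f m w ≤ lm f w := infIcc_le_lm hf hmw hw1
  rcases eq_or_lt_of_le hle with h | h
  · exact h.symm
  set e := (infIcc f m w + lm f w) / 2 with he
  have he1 : infIcc f m w < e := by rw [he]; linarith
  have he2 : e < lm f w := by rw [he]; linarith
  obtain ⟨u1, hu1mem, ⟨hu1lm, hafter⟩, -⟩ :=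
    last_cross hf hm0 hw1 hmw.le (exists_lt_of_infIcc_lt hmw.le he1)
  rcases eq_or_lt_of_le hu1mem.2 with heq | hlt
  · rw [heq] at hu1lm; linarith
  · have hpre : pre f u1 w := by
      refine ⟨hlt.le, ?_⟩
      have hptwise : ∀ v ∈ Icc u1 w, min (f u1) e ≤ f v := by
        intro v hv
        rcases eq_or_lt_of_le hv.1 with heq | hlt'
        · rw [← heq]; exact min_le_left _ _
        · exact (min_le_right _ _).trans (hafter v hlt' hv.2).1.le
      have h5 : lm f u1 ≤ min (f u1) e := le_min (lm_le_self hf u1) hu1lm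
      exact h5.trans (le_infIcc hlt.le hptwise)
    rcases eq_or_lt_of_le hu1mem.1 with heqm | hltm
    · exfalso
      rw [← heqm] at hafter
      have hmlt1 : m < 1 := lt_of_lt_of_le hmw hw1
      have hten := hf.rightCont m ⟨hm0, hmlt1⟩
      have hfm : e ≤ f m :=
        ge_of_tendsto hten (Filter.eventually_of_mem
          (Ioc_mem_nhdsGT_of_mem ⟨le_rfl, hmw⟩) fun v hv => (hafter v hv.1 hv.2).1.le)
      have hinf : e ≤ infIcc f m w := by
        apply le_infIcc hmw.le
        intro v hv
        rcases eq_or_lt_of_le hv.1 with heq | hlt'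
        · rw [← heq]; exact hfm
        · exact (hafter v hlt' hv.2).1.le
      linarith
    · exact absurd hpre (hnoanc u1 hltm hlt)

lemma mem_Icc01_of_between {s t u : ℝ} (hs : s ∈ Icc (0:ℝ) 1) (ht : t ∈ Icc (0:ℝ) 1)
    (hu : u ∈ Icc s t) : u ∈ Icc (0:ℝ) 1 := ⟨hs.1.trans hu.1, hu.2.trans ht.2⟩

lemma mrca_mem_Icc (hf : IsExcursion f) {s t : ℝ} (hs : s ∈ Icc (0:ℝ) 1)
    (ht : t ∈ Icc (0:ℝ) 1) : mrca f s t ∈ Icc (0:ℝ) 1 :=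
  ⟨mrca_nonneg hf hs ht, (mrca_le_left hf hs ht).trans hs.2⟩

lemma first_anc (hf : IsExcursion f) {s t : ℝ} (hs : s ∈ Icc (0:ℝ) 1)
    (ht : t ∈ Icc (0:ℝ) 1) (hst : s ≤ t) :
    ∃ w ∈ Icc s t, pre f w t ∧ ∀ r, s ≤ r → r < w → ¬ pre f r t := by
  classical
  set W := {u : ℝ | u ∈ Icc s t ∧ pre f u t} with hW
  have hWne : W.Nonempty := ⟨t, ⟨hst, le_rfl⟩, pre_refl hf⟩
  have hWbdd : BddBelow W := ⟨s, fun u hu => hu.1.1⟩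
  set w := sInf W with hw
  have hws : s ≤ w := le_csInf hWne fun u hu => hu.1.1
  have hwt : w ≤ t := csInf_le hWbdd ⟨⟨hst, le_rfl⟩, pre_refl hf⟩
  have hnoanc : ∀ r, s ≤ r → r < w → ¬ pre f r t := by
    intro r hsr hrw hpre
    exact absurd (csInf_le hWbdd ⟨⟨hsr, hpre.1⟩, hpre⟩) (not_le.2 hrw)
  by_cases hwW : w ∈ W
  · exact ⟨w, ⟨hws, hwt⟩, hwW.2, hnoanc⟩
  refine ⟨w, ⟨hws, hwt⟩, ⟨hwt, ?_⟩, hnoanc⟩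
  -- w < t since t ∈ W and w ∉ W
  have hwlt : w < t := by
    rcases eq_or_lt_of_le hwt with heq | h
    · exact absurd (heq ▸ (⟨⟨hst, le_rfl⟩, pre_refl hf⟩ : t ∈ W)) hwW
    · exact h
  have hw1 : w < 1 := lt_of_lt_of_le hwlt ht.2
  have hw0 : 0 ≤ w := hs.1.trans hws
  apply le_trans (lm_le_self hf w)
  apply le_of_forall_pos_le_add
  intro ε hε
  have hten := hf.rightCont w ⟨hw0, hw1⟩
  rw [Metric.tendsto_nhdsWithin_nhds] at hten
  obtain ⟨δ, hδ, hd⟩ := hten ε hε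
  obtain ⟨u, huW, hult⟩ := exists_lt_of_csInf_lt hWne (show w < w + δ by linarith)
  have hwu : w ≤ u := csInf_le hWbdd huW
  have hwu' : w < u := lt_of_le_of_ne hwu (fun h => hwW (h ▸ huW))
  have hsplit : infIcc f w t = min (infIcc f w u) (infIcc f u t) := infIcc_split hf hwu huW.1.2
  have h1 : f w - ε ≤ infIcc f w u := by
    apply le_infIcc hwu
    intro v hv
    rcases eq_or_lt_of_le hv.1 with heq | hlt
    · rw [← heq]; linarith
    · have hd1 : dist v w < δ := by
        rw [Real.dist_eq, abs_of_nonneg (by linarith [hv.1])]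
        have hvu : v ≤ u := hv.2
        linarith
      have hd2 := hd (mem_Ioi.2 hlt) hd1
      rw [Real.dist_eq] at hd2
      have := abs_lt.1 hd2
      linarith
  have h2 : f w - ε ≤ infIcc f u t := by
    have h3 : lm f u ≤ infIcc f u t := huW.2.2
    have h4 : infIcc f w u ≤ lm f u := infIcc_le_lm hf hwu' (huW.1.2.trans ht.2)
    linarith
  rw [hsplit]
  have h5 := le_min h1 h2
  linarith [h5]

lemma inf_G_eq (hf : IsExcursion f) {s t : ℝ} (hs : s ∈ Icc (0:ℝ) 1) (ht : t ∈ Icc (0:ℝ) 1)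
    (hst : s ≤ t) :
    infIcc (fun u => f u - Jop f u) s t = f (mrca f s t) - Jop f (mrca f s t) := by
  set m := mrca f s t with hm
  have hm01 : m ∈ Icc (0:ℝ) 1 := mrca_mem_Icc hf hs ht
  have hmprel : pre f m s := mrca_pre_left hf hs ht
  have hmpret : pre f m t := mrca_pre_right hf hs ht
  have hlow : ∀ u ∈ Icc s t, f m - Jop f m ≤ f u - Jop f u := by
    intro u hu
    have hu01 : u ∈ Icc (0:ℝ) 1 := mem_Icc01_of_between hs ht hu
    have hpre : pre f m u := pre_mono_right hf hmpret (hmprel.1.trans hu.1) hu.2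
    exact g_mono hf hm01 hu01 hpre
  have hge : f m - Jop f m ≤ infIcc (fun u => f u - Jop f u) s t :=
    le_infIcc hst fun u hu => hlow u hu
  obtain ⟨w, hwmem, hwpre, hnoanc0⟩ := first_anc hf hs ht hst
  have hw01 : w ∈ Icc (0:ℝ) 1 := mem_Icc01_of_between hs ht hwmem
  have hmw : m ≤ w := hmprel.1.trans hwmem.1
  have hGw : f w - Jop f w = f m - Jop f m := by
    rcases eq_or_lt_of_le hmw with heq | hlt
    · rw [← heq]
    · have hnoanc : ∀ r, m < r → r < w → ¬ pre f r t := by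
        intro r h1 h2 hpre
        rcases lt_or_ge r s with hrs | hrs
        · have hpres : pre f r s := pre_mono_right hf hpre hrs.le hst
          exact absurd (le_mrca ((hm01.1).trans h1.le) hpres hpre) (not_le.2 h1)
        · exact hnoanc0 r hrs h2 hpre
      have hnoancw : ∀ r, m < r → r < w → ¬ pre f r w := fun r h1 h2 hpre =>
        hnoanc r h1 h2 (pre_trans hf hpre hwpre hw01.2)
      have hlm : lm f w = infIcc f m w := lm_eq_inf_of_no_anc hf hm01.1 hw01.2 hlt hnoancw
      have hprew : pre f m w := pre_mono_right hf hmpret hmw hwmem.2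
      have hsum : preSum f m w = jump f w := by
        rw [preSum, tsum_eq_single w ?_]
        · rw [if_pos ⟨hprew, hlt, pre_refl hf⟩, xst_self hf]
        · intro r hr
          apply if_neg
          intro hc
          exact hnoancw r hc.2.1 (lt_of_le_of_ne hc.2.2.1 hr) hc.2.2
      have hKI2 := KI2 hf hm01 hw01 hprew
      rw [dTanc_eq, hsum] at hKI2
      have hjw : jump f w = f w - lm f w := rfl
      linarith [hlm]
  have hbddG : BddBelow ((fun u => f u - Jop f u) '' Icc s t) :=
    ⟨f m - Jop f m, by rintro x ⟨u, hu, rfl⟩; exact hlow u hu⟩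
  have hle : infIcc (fun u => f u - Jop f u) s t ≤ f w - Jop f w :=
    csInf_le hbddG ⟨w, hwmem, rfl⟩
  rw [hGw] at hle
  exact le_antisymm hle hge

lemma dT_comm (f : ℝ → ℝ) (s t : ℝ) : dT f s t = dT f t s := by
  rw [dT, dT, mrca_comm]; ring

lemma dcl_comm (g : ℝ → ℝ) (s t : ℝ) : dcl g s t = dcl g t s := by
  rw [dcl, dcl, min_comm, max_comm]; ring

lemma dT_eq_dcl_aux (hf : IsExcursion f) {s t : ℝ} (hs : s ∈ Icc (0:ℝ) 1)
    (ht : t ∈ Icc (0:ℝ) 1) (hst : s ≤ t) :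
    dT f s t = dcl (fun u => f u - Jop f u) s t := by
  have h1 := KI2 hf (mrca_mem_Icc hf hs ht) hs (mrca_pre_left hf hs ht)
  have h2 := KI2 hf (mrca_mem_Icc hf hs ht) ht (mrca_pre_right hf hs ht)
  have h3 := inf_G_eq hf hs ht hst
  rw [dT, h1, h2, dcl, min_eq_left hst, max_eq_right hst, h3]
  ring

lemma dT_eq_dcl (hf : IsExcursion f) {s t : ℝ} (hs : s ∈ Icc (0:ℝ) 1)
    (ht : t ∈ Icc (0:ℝ) 1) :
    dT f s t = dcl (fun u => f u - Jop f u) s t := by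
  rcases le_total s t with h | h
  · exact dT_eq_dcl_aux hf hs ht h
  · rw [dT_comm, dcl_comm]
    exact dT_eq_dcl_aux hf ht hs h

lemma per_term (hf : IsExcursion f) {w u : ℝ} (hwu : w < u) (r : ℝ) :
    (if pre f r w then xst f r w else 0) ≤
      (if pre f r u ∧ r ≠ u then xst f r u else 0)
        + (if pre f r w then max (infIcc f r w - max (lm f r) (infIcc f w u)) 0 else 0) := by
  by_cases hp : pre f r w
  · rw [if_pos hp, if_pos hp]
    have hsplit : infIcc f r u = min (infIcc f r w) (infIcc f w u) :=
      infIcc_split hf hp.1 hwu.le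
    have hLA : lm f r ≤ infIcc f r w := hp.2
    have hru : r ≠ u := fun h => absurd hp.1 (h ▸ (not_le.2 hwu))
    by_cases hq : pre f r u
    · rw [if_pos ⟨hq, hru⟩, xst_of_pre hf hp, xst_of_pre hf hq, hsplit]
      have hLc : lm f r ≤ infIcc f w u := by
        have h2 := hq.2; rw [hsplit] at h2
        exact h2.trans (min_le_right _ _)
      rw [max_eq_right hLc]
      rcases le_total (infIcc f r w) (infIcc f w u) with h | h
      · rw [min_eq_left h, max_eq_right (by linarith)]; linarith
      · rw [min_eq_right h, max_eq_left (by linarith)]; linarith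
    · rw [if_neg (fun hc => hq hc.1), xst_of_pre hf hp]
      have hcL : infIcc f w u < lm f r := by
        by_contra hc; push_neg at hc
        exact hq ⟨hp.1.trans hwu.le, by rw [hsplit]; exact le_min hLA hc⟩
      rw [max_eq_left hcL.le, zero_add]
      exact le_max_left _ _
  · rw [if_neg hp, if_neg hp, add_zero]
    split
    · exact xst_nonneg f r u
    · exact le_rfl

lemma chain_aux2 (hf : IsExcursion f) {w c : ℝ} (hw1 : w ≤ 1) :
    ∀ (R : Finset ℝ), (∀ r ∈ R, pre f r w) →
      ∀ a, a ≤ w → a ≤ 1 → (∀ r ∈ R, r < a) →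
      (∑ r ∈ R, max (infIcc f r w - max (lm f r) c) 0) ≤ max (lm f a - c) 0 := by
  intro R
  induction R using Finset.induction_on_max with
  | empty =>
    intro _ a _ _ _
    simp only [Finset.sum_empty]
    exact le_max_right _ _
  | insert a' S hmax IH =>
    intro hmem a haw ha1 hlt
    have ha'notin : a' ∉ S := fun h => lt_irrefl _ (hmax a' h)
    rw [Finset.sum_insert ha'notin]
    have ha' := hmem a' (Finset.mem_insert_self _ _)
    have hlt' : a' < a := hlt a' (Finset.mem_insert_self _ _)
    have IH' := IH (fun r hr => hmem r (Finset.mem_insert_of_mem hr)) a' ha'.1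
      (ha'.1.trans hw1) hmax
    have hstep : max (lm f a' - c) 0 + max (infIcc f a' w - max (lm f a') c) 0
        ≤ max (infIcc f a' w - c) 0 := by
      have hLA : lm f a' ≤ infIcc f a' w := ha'.2
      rcases le_total c (lm f a') with h | h
      · rw [max_eq_left h]
        have e1 : max (lm f a' - c) 0 = lm f a' - c := max_eq_left (by linarith)
        have e3 : max (infIcc f a' w - lm f a') 0 = infIcc f a' w - lm f a' :=
          max_eq_left (by linarith)
        have e4 : max (infIcc f a' w - c) 0 = infIcc f a' w - c := max_eq_left (by linarith)
        linarith [e1, e3, e4]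
      · rw [max_eq_right h]
        have e1 : max (lm f a' - c) 0 = 0 := max_eq_right (by linarith)
        linarith [e1]
    have htrans : max (infIcc f a' w - c) 0 ≤ max (lm f a - c) 0 := by
      have h1 : infIcc f a' w ≤ infIcc f a' a := infIcc_mono hf le_rfl haw hlt'.le
      have h2 : infIcc f a' a ≤ lm f a := infIcc_le_lm hf hlt' ha1
      exact max_le_max (by linarith) le_rfl
    calc (max (infIcc f a' w - max (lm f a') c) 0) + ∑ r ∈ S, max (infIcc f r w - max (lm f r) c) 0
        ≤ max (infIcc f a' w - max (lm f a') c) 0 + max (lm f a' - c) 0 := by linarith [IH']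
      _ = max (lm f a' - c) 0 + max (infIcc f a' w - max (lm f a') c) 0 := by ring
      _ ≤ max (infIcc f a' w - c) 0 := hstep
      _ ≤ max (lm f a - c) 0 := htrans

lemma phi_sum_le (hf : IsExcursion f) {w c : ℝ} (hw1 : w ≤ 1) (hcw : c ≤ f w)
    (R : Finset ℝ) :
    (∑ r ∈ R, if pre f r w then max (infIcc f r w - max (lm f r) c) 0 else 0) ≤ f w - c := by
  classical
  have hfilter : ∑ r ∈ R, (if pre f r w then max (infIcc f r w - max (lm f r) c) 0 else 0)
      = ∑ r ∈ R.filter (fun r => pre f r w), max (infIcc f r w - max (lm f r) c) 0 := by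
    rw [Finset.sum_filter]
  rw [hfilter]
  set R' := R.filter (fun r => pre f r w) with hR'
  have hmem : ∀ r ∈ R', pre f r w := fun r hr => (Finset.mem_filter.1 hr).2
  rcases R'.eq_empty_or_nonempty with he | hne
  · rw [he]; simp only [Finset.sum_empty]; linarith
  · set m := R'.max' hne with hm
    have hmmem := R'.max'_mem hne
    have hmm := hmem m hmmem
    rw [← Finset.sum_erase_add R' _ hmmem]
    have haux := chain_aux2 hf (c := c) hw1 (R'.erase m)
      (fun r hr => hmem r (Finset.mem_of_mem_erase hr)) m hmm.1 (hmm.1.trans hw1)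
      (fun r hr => Finset.lt_max'_of_mem_erase_max' _ hne hr)
    have hstep : max (lm f m - c) 0 + max (infIcc f m w - max (lm f m) c) 0
        ≤ max (infIcc f m w - c) 0 := by
      have hLA : lm f m ≤ infIcc f m w := hmm.2
      rcases le_total c (lm f m) with h | h
      · rw [max_eq_left h]
        have e1 : max (lm f m - c) 0 = lm f m - c := max_eq_left (by linarith)
        have e3 : max (infIcc f m w - lm f m) 0 = infIcc f m w - lm f m :=
          max_eq_left (by linarith)
        have e4 : max (infIcc f m w - c) 0 = infIcc f m w - c := max_eq_left (by linarith)
        linarith [e1, e3, e4]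
      · rw [max_eq_right h]
        have e1 : max (lm f m - c) 0 = 0 := max_eq_right (by linarith)
        linarith [e1]
    have hfin : max (infIcc f m w - c) 0 ≤ f w - c := by
      have h1 : infIcc f m w ≤ f w := infIcc_le hf ⟨hmm.1, le_rfl⟩
      rcases le_total (infIcc f m w - c) 0 with h | h
      · rw [max_eq_right h]; linarith
      · rw [max_eq_left h]; linarith
    linarith

lemma Jop_split_top (hf : IsExcursion f) {u : ℝ} (hu : u ∈ Icc (0:ℝ) 1) :
    Jop f u = jump f u + ∑' r : ℝ, (if pre f r u ∧ r ≠ u then xst f r u else 0) := by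
  have hsummand : ∀ r : ℝ, (if pre f r u then xst f r u else 0)
      = (if r = u then jump f u else 0) + (if pre f r u ∧ r ≠ u then xst f r u else 0) := by
    intro r
    by_cases hr : r = u
    · subst hr
      rw [if_pos (pre_refl hf), if_pos rfl,
        if_neg (show ¬(pre f r r ∧ r ≠ r) from fun hc => hc.2 rfl), add_zero, xst_self hf]
    · rw [if_neg hr]
      by_cases hp : pre f r u
      · rw [if_pos hp, if_pos ⟨hp, hr⟩, zero_add]
      · rw [if_neg hp, if_neg (fun hc => hp hc.1), zero_add]
  have h2 : Summable (fun r : ℝ => if r = u then jump f u else 0) :=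
    (hasSum_ite_eq u (jump f u)).summable
  have h3 : Summable (fun r : ℝ => if pre f r u ∧ r ≠ u then xst f r u else 0) := by
    apply Summable.of_nonneg_of_le _ _ (summable_J hf hu)
    · intro r; split
      · exact xst_nonneg f r u
      · exact le_rfl
    · intro r
      by_cases hc : pre f r u ∧ r ≠ u
      · rw [if_pos hc, if_pos hc.1]
      · rw [if_neg hc]; split
        · exact xst_nonneg f r u
        · exact le_rfl
  rw [Jop, tsum_congr hsummand, Summable.tsum_add h2 h3, tsum_ite_eq]

lemma summable_J' (hf : IsExcursion f) {u : ℝ} (hu : u ∈ Icc (0:ℝ) 1) :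
    Summable (fun r : ℝ => if pre f r u ∧ r ≠ u then xst f r u else 0) := by
  apply Summable.of_nonneg_of_le _ _ (summable_J hf hu)
  · intro r; split
    · exact xst_nonneg f r u
    · exact le_rfl
  · intro r
    by_cases hc : pre f r u ∧ r ≠ u
    · rw [if_pos hc, if_pos hc.1]
    · rw [if_neg hc]; split
      · exact xst_nonneg f r u
      · exact le_rfl

lemma tendsto_J_left (hf : IsExcursion f) {u : ℝ} (hu0 : 0 < u) (hu1 : u ≤ 1) :
    Tendsto (Jop f) (𝓝[<] u) (𝓝 (Jop f u - jump f u)) := by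
  classical
  set T := ∑' r : ℝ, (if pre f r u ∧ r ≠ u then xst f r u else 0) with hT
  have hTsum := summable_J' hf ⟨hu0.le, hu1⟩
  have hTeq : Jop f u - jump f u = T := by rw [Jop_split_top hf ⟨hu0.le, hu1⟩]; ring
  rw [hTeq, Metric.tendsto_nhdsWithin_nhds]
  intro ε hε
  obtain ⟨δ1, hδ1, hδ1c, happ⟩ := lm_left_approx hf hu0 hu1 (show (0:ℝ) < ε/8 by linarith)
  have hev : ∀ᶠ R : Finset ℝ in atTop,
      T - ε/8 < ∑ r ∈ R, (if pre f r u ∧ r ≠ u then xst f r u else 0) :=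
    hTsum.hasSum.eventually (eventually_gt_nhds (show T - ε/8 < T by linarith))
  obtain ⟨R0, hR0⟩ := hev.exists
  set R1 := R0.filter (fun r => r < u) with hR1
  have hsumR1 : T - ε/8 < ∑ r ∈ R1, (if pre f r u ∧ r ≠ u then xst f r u else 0) := by
    have heq : ∑ r ∈ R1, (if pre f r u ∧ r ≠ u then xst f r u else 0)
        = ∑ r ∈ R0, (if pre f r u ∧ r ≠ u then xst f r u else 0) := by
      apply Finset.sum_filter_of_ne
      intro x hx hne
      by_contra hc
      push_neg at hc
      apply hne
      rw [if_neg]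
      intro hcc
      exact hcc.2 (le_antisymm hcc.1.1 hc)
    rw [heq]
    exact hR0
  have hex : ∃ v0, v0 < u ∧ ∀ r ∈ R1, r ≤ v0 := by
    rcases R1.eq_empty_or_nonempty with he | hne
    · exact ⟨u - δ1, by linarith, by rw [he]; simp⟩
    · exact ⟨R1.max' hne, (Finset.mem_filter.1 (R1.max'_mem hne)).2, fun r hr => R1.le_max' r hr⟩
  obtain ⟨v0, hv0u, hv0⟩ := hex
  refine ⟨min δ1 (u - v0), lt_min hδ1 (by linarith), ?_⟩
  intro w hw hwd
  have hwu : w < u := mem_Iio.1 hw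
  have hwl : u - min δ1 (u - v0) < w := by
    rw [Real.dist_eq, abs_of_nonpos (by linarith)] at hwd; linarith
  have hminδ : min δ1 (u - v0) ≤ δ1 := min_le_left _ _
  have hw1 : w ≤ 1 := hwu.le.trans hu1
  have hw0 : 0 ≤ w := by linarith
  have hwIcc : w ∈ Icc (0:ℝ) 1 := ⟨hw0, hw1⟩
  have hlow : T - ε/8 < Jop f w := by
    have hterm : ∀ r ∈ R1, (if pre f r u ∧ r ≠ u then xst f r u else 0)
        ≤ (if pre f r w then xst f r w else 0) := by
      intro r hr
      by_cases hc : pre f r u ∧ r ≠ u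
      · have hrw : r ≤ w := by
          have h1 := hv0 r hr
          have h2 := min_le_right δ1 (u - v0)
          linarith
        have hinfm : infIcc f r u ≤ infIcc f r w := infIcc_mono hf le_rfl hwu.le hrw
        have hprew : pre f r w := ⟨hrw, hc.1.2.trans hinfm⟩
        rw [if_pos hc, if_pos hprew, xst, xst, if_pos hc.1.1, if_pos hrw]
        exact max_le_max (by linarith) le_rfl
      · rw [if_neg hc]
        split
        · exact xst_nonneg f r w
        · exact le_rfl
    have h1 := Finset.sum_le_sum hterm
    have h2 : ∑ r ∈ R1, (if pre f r w then xst f r w else 0) ≤ Jop f w :=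
      Summable.sum_le_tsum R1 (fun r _ => by
        split
        · exact xst_nonneg f r w
        · exact le_rfl) (summable_J hf hwIcc)
    linarith
  have hhigh : Jop f w ≤ T + (f w - infIcc f w u) := by
    apply Summable.tsum_le_of_sum_le (summable_J hf hwIcc)
    intro R
    have h1 := Finset.sum_le_sum (fun r (_ : r ∈ R) => per_term hf hwu r)
    rw [Finset.sum_add_distrib] at h1
    have h2 : ∑ r ∈ R, (if pre f r u ∧ r ≠ u then xst f r u else 0) ≤ T :=
      Summable.sum_le_tsum R (fun r _ => by
        split
        · exact xst_nonneg f r u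
        · exact le_rfl) hTsum
    have h3 := phi_sum_le hf (c := infIcc f w u) hw1
      (infIcc_le hf ⟨le_rfl, hwu.le⟩) R
    linarith
  have hfw := (happ w (by linarith) hwu).1
  have hinf_lb : lm f u - ε/8 ≤ infIcc f w u := by
    apply le_infIcc hwu.le
    intro v hv
    rcases eq_or_lt_of_le hv.2 with heq | hlt
    · rw [heq]
      have := lm_le_self hf u
      linarith
    · have h2 := (happ v (by linarith [hv.1]) hlt).1
      have := (abs_le.1 h2).1
      linarith
  have hband : f w - infIcc f w u ≤ ε/4 := by
    have := (abs_le.1 hfw).2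
    linarith
  rw [Real.dist_eq, abs_lt]
  constructor
  · linarith
  · linarith

lemma bddB' {φ : ℝ → ℝ} (h0 : ∀ u, 0 ≤ φ u) (s t : ℝ) : BddBelow (φ '' Icc s t) :=
  ⟨0, by rintro x ⟨v, -, rfl⟩; exact h0 v⟩

lemma infIcc_le' {φ : ℝ → ℝ} (h0 : ∀ u, 0 ≤ φ u) {s t u : ℝ} (h : u ∈ Icc s t) :
    infIcc φ s t ≤ φ u := csInf_le (bddB' h0 s t) ⟨u, h, rfl⟩

lemma infIcc_nonneg' {φ : ℝ → ℝ} (h0 : ∀ u, 0 ≤ φ u) (s t : ℝ) : 0 ≤ infIcc φ s t := by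
  rcases le_or_gt s t with h | h
  · exact le_infIcc h fun u _ => h0 u
  · simp [infIcc, Icc_eq_empty_of_lt h, Real.sInf_empty]

lemma infIcc_mono' {φ : ℝ → ℝ} (h0 : ∀ u, 0 ≤ φ u) {s t s' t' : ℝ} (hs : s' ≤ s)
    (ht : t ≤ t') (h : s ≤ t) : infIcc φ s' t' ≤ infIcc φ s t :=
  csInf_le_csInf (bddB' h0 s' t') ((nonempty_Icc.2 h).image φ)
    (image_mono (Icc_subset_Icc hs ht))

lemma pre_zero' {φ : ℝ → ℝ} (h0 : ∀ u, 0 ≤ φ u) {t : ℝ} (ht : 0 ≤ t) : pre φ 0 t :=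
  ⟨ht, by rw [lm, if_pos rfl]; exact infIcc_nonneg' h0 0 t⟩

lemma Jop_of_neg (hf : IsExcursion f) {t : ℝ} (ht : t < 0) : Jop f t = 0 := by
  rw [Jop]
  convert tsum_zero with r
  by_cases hp : pre f r t
  · rw [if_pos hp]; exact xst_of_neg hf (lt_of_le_of_lt hp.1 ht)
  · rw [if_neg hp]

lemma Jop_of_gt_one (hf : IsExcursion f) {t : ℝ} (ht : 1 < t) : Jop f t = 0 := by
  rw [Jop]
  convert tsum_zero with r
  by_cases hp : pre f r t
  · rw [if_pos hp, xst, if_pos hp.1, max_eq_right]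
    have h1 : infIcc f r t ≤ f t := infIcc_le hf ⟨hp.1, le_rfl⟩
    have h2 : f t = 0 := hf.zero_outside t
      (by simp only [mem_Icc, not_and_or, not_le]; right; exact ht)
    have h3 := lm_nonneg hf r
    linarith
  · rw [if_neg hp]

lemma Jop_zero (hf : IsExcursion f) : Jop f 0 = f 0 := by
  rw [Jop, tsum_eq_single 0]
  · rw [if_pos (pre_refl hf), xst_zero_left hf le_rfl, infIcc_self]
  · intro r hr
    by_cases hp : pre f r 0
    · rw [if_pos hp]; exact xst_of_neg hf (lt_of_le_of_ne hp.1 hr)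
    · rw [if_neg hp]

lemma G_nonneg (hf : IsExcursion f) (u : ℝ) : 0 ≤ f u - Jop f u := by
  by_cases h : u ∈ Icc (0:ℝ) 1
  · linarith [Jop_le hf h]
  · rw [hf.zero_outside u h]
    rcases lt_or_ge u 0 with h' | h'
    · rw [Jop_of_neg hf h']; norm_num
    · have h1 : 1 < u := by
        by_contra hc; push_neg at hc
        exact h ⟨h', hc⟩
      rw [Jop_of_gt_one hf h1]; norm_num

lemma G_zero (hf : IsExcursion f) : f 0 - Jop f 0 = 0 := by rw [Jop_zero hf]; ring

lemma tendsto_G_left (hf : IsExcursion f) {u : ℝ} (hu0 : 0 < u) (hu1 : u ≤ 1) :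
    Tendsto (fun v => f v - Jop f v) (𝓝[<] u) (𝓝 (f u - Jop f u)) := by
  have h1 := tendsto_lm hf hu0 hu1
  have h2 := tendsto_J_left hf hu0 hu1
  have h3 : f u - Jop f u = lm f u - (Jop f u - jump f u) := by rw [jump]; ring
  rw [h3]
  exact h1.sub h2

lemma lm_G (hf : IsExcursion f) (u : ℝ) :
    lm (fun v => f v - Jop f v) u = f u - Jop f u := by
  rcases lt_trichotomy u 0 with h | h | h
  · rw [lm, if_neg h.ne]
    have hGu : f u - Jop f u = 0 := by
      rw [hf.zero_outside u (by simp only [mem_Icc, not_and_or, not_le]; left; exact h),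
        Jop_of_neg hf h]
      ring
    rw [hGu]
    apply leftLim_eq_of_tendsto
    apply Tendsto.congr' _ (tendsto_const_nhds (α := ℝ) (x := (0:ℝ)))
    filter_upwards [self_mem_nhdsWithin] with v hv
    have hv' : v < 0 := (mem_Iio.1 hv).trans h
    rw [hf.zero_outside v (by simp only [mem_Icc, not_and_or, not_le]; left; exact hv'),
      Jop_of_neg hf hv']
    ring
  · subst h
    rw [lm, if_pos rfl]
    exact (G_zero hf).symm
  · rcases le_or_gt u 1 with h1 | h1
    · rw [lm, if_neg h.ne']
      exact leftLim_eq_of_tendsto (tendsto_G_left hf h h1)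
    · rw [lm, if_neg h.ne']
      have hGu : f u - Jop f u = 0 := by
        rw [hf.zero_outside u (by simp only [mem_Icc, not_and_or, not_le]; right; exact h1),
          Jop_of_gt_one hf h1]
        ring
      rw [hGu]
      apply leftLim_eq_of_tendsto
      apply Tendsto.congr' _ (tendsto_const_nhds (α := ℝ) (x := (0:ℝ)))
      filter_upwards [Ioo_mem_nhdsLT_of_mem ⟨h1, le_rfl⟩] with v hv
      rw [hf.zero_outside v (by simp only [mem_Icc, not_and_or, not_le]; right; exact hv.1),
        Jop_of_gt_one hf hv.1]
      ring

lemma sSup_pre_G (hf : IsExcursion f) {A : Set ℝ} {s : ℝ} (hs : s ∈ Icc (0:ℝ) 1)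
    (hne : A.Nonempty) (hA : ∀ r ∈ A, 0 ≤ r ∧ pre (fun v => f v - Jop f v) r s) :
    pre (fun v => f v - Jop f v) (sSup A) s := by
  have hbdd : BddAbove A := ⟨s, fun r hr => (hA r hr).2.1⟩
  set m := sSup A with hm
  have hms : m ≤ s := csSup_le hne fun r hr => (hA r hr).2.1
  have hm0 : 0 ≤ m := le_csSup hbdd hne.choose_spec |>.trans' (hA _ hne.choose_spec).1
  refine ⟨hms, ?_⟩
  rw [lm_G hf m]
  rcases eq_or_lt_of_le hm0 with h0 | h0
  · rw [← h0, G_zero hf]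
    exact infIcc_nonneg' (G_nonneg hf) 0 s
  · apply le_of_forall_pos_le_add
    intro ε hε
    have hten := tendsto_G_left hf h0 (hms.trans hs.2)
    rw [Metric.tendsto_nhdsWithin_nhds] at hten
    obtain ⟨δ, hδ, hd⟩ := hten ε hε
    obtain ⟨r, hr, hrm⟩ := exists_lt_of_lt_csSup hne (show m - δ < m by linarith)
    have hrle : r ≤ m := le_csSup hbdd hr
    rcases eq_or_lt_of_le hrle with heq | hrlt
    · have h5 := (hA r hr).2.2
      rw [lm_G hf r] at h5
      have h6 : f m - Jop f m ≤ infIcc (fun v => f v - Jop f v) m s := heq ▸ h5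
      linarith [infIcc_nonneg' (G_nonneg hf) m s, hε]
    · have hdist : dist r m < δ := by
        rw [Real.dist_eq, abs_of_nonpos (by linarith)]; linarith
      have h5 := hd (mem_Iio.2 hrlt) hdist
      rw [Real.dist_eq] at h5
      have h6 := (abs_lt.1 h5).1
      have h7 := (hA r hr).2.2
      rw [lm_G hf r] at h7
      have h8 : infIcc (fun v => f v - Jop f v) r s ≤ infIcc (fun v => f v - Jop f v) m s :=
        infIcc_mono' (G_nonneg hf) hrle le_rfl hms
      linarith

lemma pre_G_of_pre (hf : IsExcursion f) {a b : ℝ} (ha : a ∈ Icc (0:ℝ) 1)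
    (hb : b ∈ Icc (0:ℝ) 1) (h : pre f a b) : pre (fun v => f v - Jop f v) a b := by
  refine ⟨h.1, ?_⟩
  rw [lm_G hf a]
  apply le_infIcc h.1
  intro v hv
  exact g_mono hf ha (mem_Icc01_of_between ha hb hv) (pre_mono_right hf h hv.1 hv.2)

lemma inf_eq_self_of_preG (hf : IsExcursion f) {a b : ℝ}
    (h : pre (fun v => f v - Jop f v) a b) :
    infIcc (fun v => f v - Jop f v) a b = f a - Jop f a := by
  refine le_antisymm (infIcc_le' (G_nonneg hf) ⟨le_rfl, h.1⟩) ?_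
  have h2 := h.2
  rw [lm_G hf a] at h2
  exact h2

lemma preSum_G_eq_zero (hf : IsExcursion f) (m s : ℝ) :
    preSum (fun v => f v - Jop f v) m s = 0 := by
  rw [preSum]
  convert tsum_zero with r
  by_cases hc : pre (fun v => f v - Jop f v) m r ∧ m < r
      ∧ pre (fun v => f v - Jop f v) r s
  · rw [if_pos hc, xst, if_pos hc.2.2.1, max_eq_right]
    have h1 : infIcc (fun v => f v - Jop f v) r s ≤ f r - Jop f r :=
      infIcc_le' (G_nonneg hf) ⟨le_rfl, hc.2.2.1⟩
    rw [lm_G hf r]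
    linarith
  · rw [if_neg hc]

lemma dT_G_aux (hf : IsExcursion f) {s t : ℝ} (hs : s ∈ Icc (0:ℝ) 1)
    (ht : t ∈ Icc (0:ℝ) 1) (hst : s ≤ t) :
    dT (fun u => f u - Jop f u) s t = dT f s t := by
  have hGne : {r : ℝ | 0 ≤ r ∧ pre (fun v => f v - Jop f v) r s
      ∧ pre (fun v => f v - Jop f v) r t}.Nonempty :=
    ⟨0, le_rfl, pre_zero' (G_nonneg hf) hs.1, pre_zero' (G_nonneg hf) ht.1⟩
  have hGbdd : BddAbove {r : ℝ | 0 ≤ r ∧ pre (fun v => f v - Jop f v) r s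
      ∧ pre (fun v => f v - Jop f v) r t} := ⟨s, fun r hr => hr.2.1.1⟩
  set m := mrca f s t with hmdef
  set m'' := mrca (fun u => f u - Jop f u) s t with hm''def
  have hm01 := mrca_mem_Icc hf hs ht
  have hm''s : m'' ≤ s := csSup_le hGne fun r hr => hr.2.1.1
  have hm''pres : pre (fun v => f v - Jop f v) m'' s :=
    sSup_pre_G hf hs hGne fun r hr => ⟨hr.1, hr.2.1⟩
  have hm''pret : pre (fun v => f v - Jop f v) m'' t :=
    sSup_pre_G hf ht hGne fun r hr => ⟨hr.1, hr.2.2⟩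
  have hmm'' : m ≤ m'' := le_csSup hGbdd ⟨mrca_nonneg hf hs ht,
    pre_G_of_pre hf hm01 hs (mrca_pre_left hf hs ht),
    pre_G_of_pre hf hm01 ht (mrca_pre_right hf hs ht)⟩
  have hup : f m - Jop f m ≤ f m'' - Jop f m'' := by
    have h1 : infIcc (fun v => f v - Jop f v) m s ≤ infIcc (fun v => f v - Jop f v) m'' s :=
      infIcc_mono' (G_nonneg hf) hmm'' le_rfl hm''s
    rw [inf_eq_self_of_preG hf hm''pres,
      inf_eq_self_of_preG hf (pre_G_of_pre hf hm01 hs (mrca_pre_left hf hs ht))] at h1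
    exact h1
  have hdown : f m'' - Jop f m'' ≤ f m - Jop f m := by
    have h2 : ∀ u ∈ Icc s t, f m'' - Jop f m'' ≤ f u - Jop f u := by
      intro u hu
      have h3 := hm''pret.2
      rw [lm_G hf m''] at h3
      exact h3.trans (infIcc_le' (G_nonneg hf) ⟨hm''s.trans hu.1, hu.2⟩)
    have h3 : f m'' - Jop f m'' ≤ infIcc (fun v => f v - Jop f v) s t := le_infIcc hst h2
    rw [inf_G_eq hf hs ht hst] at h3
    exact h3
  have hGm : f m'' - Jop f m'' = f m - Jop f m := le_antisymm hdown hup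
  have e1 : dTanc (fun u => f u - Jop f u) m'' s = (f s - Jop f s) - (f m'' - Jop f m'') := by
    rw [dTanc_eq, inf_eq_self_of_preG hf hm''pres, preSum_G_eq_zero hf]
    ring
  have e2 : dTanc (fun u => f u - Jop f u) m'' t = (f t - Jop f t) - (f m'' - Jop f m'') := by
    rw [dTanc_eq, inf_eq_self_of_preG hf hm''pret, preSum_G_eq_zero hf]
    ring
  rw [dT, dT, ← hm''def, ← hmdef, e1, e2,
    KI2 hf hm01 hs (mrca_pre_left hf hs ht), KI2 hf hm01 ht (mrca_pre_right hf hs ht), hGm]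

lemma dT_G (hf : IsExcursion f) {s t : ℝ} (hs : s ∈ Icc (0:ℝ) 1) (ht : t ∈ Icc (0:ℝ) 1) :
    dT f s t = dT (fun u => f u - Jop f u) s t := by
  rcases le_total s t with h | h
  · exact (dT_G_aux hf hs ht h).symm
  · rw [dT_comm f, dT_comm (fun u => f u - Jop f u)]
    exact (dT_G_aux hf ht hs h).symm

lemma xst_eq_zero_of_not_pre {r t : ℝ} (h : ¬ pre f r t) : xst f r t = 0 := by
  rcases le_or_gt r t with h1 | h1
  · have h2 : ¬ lm f r ≤ infIcc f r t := fun h2 => h ⟨h1, h2⟩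
    push_neg at h2
    rw [xst, if_pos h1, max_eq_right (by linarith)]
  · rw [xst, if_neg (not_le.2 h1)]

/-- Generalized jump-filtered `J` operator. -/
def Jgen (f : ℝ → ℝ) (P : ℝ → Prop) (t : ℝ) : ℝ :=
  ∑' r : ℝ, if pre f r t ∧ P r then xst f r t else 0

lemma Jop_eq_Jgen (f : ℝ → ℝ) : Jop f = Jgen f (fun _ => True) :=
  funext fun t => tsum_congr fun r => by simp

lemma Jeps_eq_Jgen (f : ℝ → ℝ) (ε : ℝ) : Jeps f ε = Jgen f (fun r => ε ≤ jump f r) := rfl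

section Jgen
variable {P : ℝ → Prop}

lemma Jgen_summand_nonneg (f : ℝ → ℝ) (P : ℝ → Prop) (t r : ℝ) :
    0 ≤ (if pre f r t ∧ P r then xst f r t else 0) := by
  split
  · exact xst_nonneg f r t
  · exact le_rfl

lemma Jgen_summand_le (f : ℝ → ℝ) (P : ℝ → Prop) (t r : ℝ) :
    (if pre f r t ∧ P r then xst f r t else 0) ≤ (if pre f r t then xst f r t else 0) := by
  by_cases h : pre f r t ∧ P r
  · rw [if_pos h, if_pos h.1]
  · rw [if_neg h]
    split
    · exact xst_nonneg f r t
    · exact le_rfl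

lemma summable_Jgen (hf : IsExcursion f) {t : ℝ} (ht : t ∈ Icc (0:ℝ) 1) (P : ℝ → Prop) :
    Summable (fun r : ℝ => if pre f r t ∧ P r then xst f r t else 0) :=
  Summable.of_nonneg_of_le (Jgen_summand_nonneg f P t) (Jgen_summand_le f P t)
    (summable_J hf ht)

lemma Jgen_nonneg (f : ℝ → ℝ) (P : ℝ → Prop) (t : ℝ) : 0 ≤ Jgen f P t :=
  tsum_nonneg (Jgen_summand_nonneg f P t)

lemma Jgen_of_neg (hf : IsExcursion f) (P : ℝ → Prop) {t : ℝ} (ht : t < 0) :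
    Jgen f P t = 0 := by
  rw [Jgen]
  convert tsum_zero with r
  by_cases hp : pre f r t ∧ P r
  · rw [if_pos hp]; exact xst_of_neg hf (lt_of_le_of_lt hp.1.1 ht)
  · rw [if_neg hp]

lemma xst_to_one (hf : IsExcursion f) {r t : ℝ} (ht : 1 ≤ t) : xst f r t = 0 := by
  rcases le_or_gt r t with h1 | h1
  · rw [xst, if_pos h1, max_eq_right]
    have h2 : infIcc f r t ≤ f t := infIcc_le hf ⟨h1, le_rfl⟩
    have h3 : f t ≤ 0 := by
      rcases eq_or_lt_of_le ht with heq | hlt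
      · rw [← heq, hf.one]
      · rw [hf.zero_outside t (by simp only [mem_Icc, not_and_or, not_le]; right; exact hlt)]
    have h4 := lm_nonneg hf r
    linarith
  · rw [xst, if_neg (not_le.2 h1)]

lemma Jgen_of_ge_one (hf : IsExcursion f) (P : ℝ → Prop) {t : ℝ} (ht : 1 ≤ t) :
    Jgen f P t = 0 := by
  rw [Jgen]
  convert tsum_zero with r
  by_cases hp : pre f r t ∧ P r
  · rw [if_pos hp]; exact xst_to_one hf ht
  · rw [if_neg hp]

lemma Jgen_zero (hf : IsExcursion f) (P : ℝ → Prop) :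
    Jgen f P 0 = if P 0 then f 0 else 0 := by
  rw [Jgen, tsum_eq_single 0]
  · by_cases h : P 0
    · rw [if_pos ⟨pre_refl hf, h⟩, if_pos h, xst_zero_left hf le_rfl, infIcc_self]
    · rw [if_neg (fun hc => h hc.2), if_neg h]
  · intro r hr
    by_cases hp : pre f r 0 ∧ P r
    · rw [if_pos hp]; exact xst_of_neg hf (lt_of_le_of_ne hp.1.1 hr)
    · rw [if_neg hp]

/-- The sum appearing after removing the root term from `Jgen`. -/
lemma summable_Jgen' (hf : IsExcursion f) {u : ℝ} (hu : u ∈ Icc (0:ℝ) 1) (P : ℝ → Prop) :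
    Summable (fun r : ℝ => if (pre f r u ∧ P r) ∧ r ≠ u then xst f r u else 0) := by
  apply Summable.of_nonneg_of_le _ _ (summable_Jgen hf hu P)
  · intro r; split
    · exact xst_nonneg f r u
    · exact le_rfl
  · intro r
    by_cases hc : (pre f r u ∧ P r) ∧ r ≠ u
    · rw [if_pos hc, if_pos hc.1]
    · rw [if_neg hc]; exact Jgen_summand_nonneg f P u r

lemma Jgen_split_top (hf : IsExcursion f) {u : ℝ} (hu : u ∈ Icc (0:ℝ) 1) (P : ℝ → Prop) :
    Jgen f P u = (if P u then jump f u else 0)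
      + ∑' r : ℝ, (if (pre f r u ∧ P r) ∧ r ≠ u then xst f r u else 0) := by
  have hsummand : ∀ r : ℝ, (if pre f r u ∧ P r then xst f r u else 0)
      = (if r = u then (if P u then jump f u else 0) else 0)
        + (if (pre f r u ∧ P r) ∧ r ≠ u then xst f r u else 0) := by
    intro r
    by_cases hr : r = u
    · subst hr
      rw [if_pos rfl, if_neg (show ¬((pre f r r ∧ P r) ∧ r ≠ r) from fun hc => hc.2 rfl),
        add_zero]
      by_cases h : P r
      · rw [if_pos ⟨pre_refl hf, h⟩, if_pos h, xst_self hf]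
      · rw [if_neg (fun hc => h hc.2), if_neg h]
    · rw [if_neg hr]
      by_cases hp : pre f r u ∧ P r
      · rw [if_pos hp, if_pos ⟨hp, hr⟩, zero_add]
      · rw [if_neg hp, if_neg (fun hc => hp hc.1), zero_add]
  have h2 : Summable (fun r : ℝ => if r = u then (if P u then jump f u else 0) else 0) :=
    (hasSum_ite_eq u _).summable
  rw [Jgen, tsum_congr hsummand, Summable.tsum_add h2 (summable_Jgen' hf hu P), tsum_ite_eq]

/-- The generalized sum in the splitting identity. -/
def preSumGen (f : ℝ → ℝ) (P : ℝ → Prop) (m s : ℝ) : ℝ :=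
  ∑' r : ℝ, if pre f m r ∧ m < r ∧ pre f r s ∧ P r then xst f r s else 0

lemma preSumGen_nonneg (f : ℝ → ℝ) (P : ℝ → Prop) (m s : ℝ) : 0 ≤ preSumGen f P m s :=
  tsum_nonneg fun r => by
    split
    · exact xst_nonneg f r s
    · exact le_rfl

lemma summable_preSumGen (hf : IsExcursion f) {s : ℝ} (hs : s ∈ Icc (0:ℝ) 1)
    (P : ℝ → Prop) (m : ℝ) :
    Summable (fun r : ℝ => if pre f m r ∧ m < r ∧ pre f r s ∧ P r then xst f r s else 0) := by
  apply Summable.of_nonneg_of_le _ _ (summable_Jgen hf hs P)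
  · intro r; split
    · exact xst_nonneg f r s
    · exact le_rfl
  · intro r
    by_cases h : pre f m r ∧ m < r ∧ pre f r s ∧ P r
    · rw [if_pos h, if_pos ⟨h.2.2.1, h.2.2.2⟩]
    · rw [if_neg h]; exact Jgen_summand_nonneg f P s r

lemma KI1gen (hf : IsExcursion f) {m s : ℝ} (hm : m ∈ Icc (0:ℝ) 1)
    (hs : s ∈ Icc (0:ℝ) 1) (hms : pre f m s) (P : ℝ → Prop) :
    Jgen f P s + (if P m then jump f m else 0)
      = Jgen f P m + (if P m then xst f m s else 0) + preSumGen f P m s := by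
  have hsummand : ∀ r : ℝ, (if pre f r s ∧ P r then xst f r s else 0)
      + (if r = m then (if P m then jump f m else 0) else 0)
      = ((if pre f r m ∧ P r then xst f r m else 0)
          + (if r = m then (if P m then xst f m s else 0) else 0))
        + (if pre f m r ∧ m < r ∧ pre f r s ∧ P r then xst f r s else 0) := by
    intro r
    by_cases hrm : r = m
    · subst hrm
      rw [if_pos rfl, if_pos rfl,
        if_neg (show ¬(pre f r r ∧ r < r ∧ pre f r s ∧ P r) from fun hc => lt_irrefl r hc.2.1),
        add_zero]
      by_cases h : P r
      · have e1 : (if pre f r s ∧ P r then xst f r s else 0) = xst f r s := if_pos ⟨hms, h⟩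
        have e2 : (if pre f r r ∧ P r then xst f r r else 0) = xst f r r :=
          if_pos ⟨pre_refl hf, h⟩
        have e3 : (if P r then jump f r else 0) = jump f r := if_pos h
        have e4 : (if P r then xst f r s else 0) = xst f r s := if_pos h
        rw [e1, e2, e3, e4, xst_self hf]
        ring
      · have e1 : (if pre f r s ∧ P r then xst f r s else 0) = 0 :=
          if_neg (fun hc => h hc.2)
        have e2 : (if pre f r r ∧ P r then xst f r r else 0) = 0 :=
          if_neg (fun hc => h hc.2)
        have e3 : (if P r then jump f r else 0) = 0 := if_neg h
        have e4 : (if P r then xst f r s else 0) = 0 := if_neg h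
        simp [e1, e2, e3, e4]
    · rw [if_neg hrm, if_neg hrm]
      rcases lt_or_gt_of_ne hrm with hlt | hgt
      · rw [if_neg (show ¬(pre f m r ∧ m < r ∧ pre f r s ∧ P r) from
          fun hc => absurd hc.1.1 (not_le.2 hlt))]
        by_cases hp : pre f r s ∧ P r
        · have hpm : pre f r m := pre_chain hf hp.1 hms hlt.le
          rw [if_pos hp, if_pos ⟨hpm, hp.2⟩]
          have hinf : infIcc f r s = infIcc f r m := by
            rw [infIcc_split hf hlt.le hms.1]
            exact min_eq_left ((infIcc_le_lm hf hlt hm.2).trans hms.2)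
          rw [xst, xst, if_pos hp.1.1, if_pos hpm.1, hinf]
          ring
        · have hpm : ¬ (pre f r m ∧ P r) := fun h => hp ⟨pre_trans hf h.1 hms hm.2, h.2⟩
          rw [if_neg hp, if_neg hpm]
          ring
      · have hpm : ¬ (pre f r m ∧ P r) := fun h => absurd h.1.1 (not_le.2 hgt)
        rw [if_neg hpm]
        by_cases hp : pre f r s ∧ P r
        · rw [if_pos hp, if_pos ⟨pre_chain hf hms hp.1 hgt.le, hgt, hp.1, hp.2⟩]
          ring
        · rw [if_neg hp, if_neg (show ¬(pre f m r ∧ m < r ∧ pre f r s ∧ P r) from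
            fun hc => hp ⟨hc.2.2.1, hc.2.2.2⟩)]
          ring
  have hs1 := summable_Jgen hf hs P
  have hs2 : Summable (fun r : ℝ => if r = m then (if P m then jump f m else 0) else 0) :=
    (hasSum_ite_eq m _).summable
  have hs3 := summable_Jgen hf hm P
  have hs4 : Summable (fun r : ℝ => if r = m then (if P m then xst f m s else 0) else 0) :=
    (hasSum_ite_eq m _).summable
  have hs5 := summable_preSumGen hf hs P m
  have h := tsum_congr (L := SummationFilter.unconditional ℝ) hsummand
  rw [Summable.tsum_add hs1 hs2, Summable.tsum_add (hs3.add hs4) hs5, Summable.tsum_add hs3 hs4,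
    tsum_ite_eq, tsum_ite_eq] at h
  exact h

end Jgen

section Jgen2
variable {P : ℝ → Prop}

lemma per_term_gen (hf : IsExcursion f) {w u : ℝ} (hwu : w < u) (P : ℝ → Prop) (r : ℝ) :
    (if pre f r w ∧ P r then xst f r w else 0) ≤
      (if (pre f r u ∧ P r) ∧ r ≠ u then xst f r u else 0)
        + (if pre f r w then max (infIcc f r w - max (lm f r) (infIcc f w u)) 0 else 0) := by
  by_cases hp : pre f r w ∧ P r
  · rw [if_pos hp, if_pos hp.1]
    have hsplit : infIcc f r u = min (infIcc f r w) (infIcc f w u) :=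
      infIcc_split hf hp.1.1 hwu.le
    have hLA : lm f r ≤ infIcc f r w := hp.1.2
    have hru : r ≠ u := fun h => absurd hp.1.1 (h ▸ (not_le.2 hwu))
    by_cases hq : pre f r u
    · rw [if_pos ⟨⟨hq, hp.2⟩, hru⟩, xst_of_pre hf hp.1, xst_of_pre hf hq, hsplit]
      have hLc : lm f r ≤ infIcc f w u := by
        have h2 := hq.2; rw [hsplit] at h2
        exact h2.trans (min_le_right _ _)
      rw [max_eq_right hLc]
      rcases le_total (infIcc f r w) (infIcc f w u) with h | h
      · rw [min_eq_left h, max_eq_right (by linarith)]; linarith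
      · rw [min_eq_right h, max_eq_left (by linarith)]; linarith
    · rw [if_neg (fun hc => hq hc.1.1), xst_of_pre hf hp.1]
      have hcL : infIcc f w u < lm f r := by
        by_contra hc; push_neg at hc
        exact hq ⟨hp.1.1.trans hwu.le, by rw [hsplit]; exact le_min hLA hc⟩
      rw [max_eq_left hcL.le, zero_add]
      exact le_max_left _ _
  · rw [if_neg hp]
    have h1 : 0 ≤ (if (pre f r u ∧ P r) ∧ r ≠ u then xst f r u else 0) := by
      split
      · exact xst_nonneg f r u
      · exact le_rfl
    have h2 : 0 ≤ (if pre f r w then max (infIcc f r w - max (lm f r) (infIcc f w u)) 0 else 0) := by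
      split
      · exact le_max_right _ _
      · exact le_rfl
    linarith

lemma tendsto_Jgen_left (hf : IsExcursion f) {u : ℝ} (hu0 : 0 < u) (hu1 : u ≤ 1)
    (P : ℝ → Prop) :
    Tendsto (Jgen f P) (𝓝[<] u)
      (𝓝 (Jgen f P u - (if P u then jump f u else 0))) := by
  classical
  set T := ∑' r : ℝ, (if (pre f r u ∧ P r) ∧ r ≠ u then xst f r u else 0) with hT
  have hTsum := summable_Jgen' hf ⟨hu0.le, hu1⟩ P
  have hTeq : Jgen f P u - (if P u then jump f u else 0) = T := by
    rw [Jgen_split_top hf ⟨hu0.le, hu1⟩ P]; ring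
  rw [hTeq, Metric.tendsto_nhdsWithin_nhds]
  intro ε hε
  obtain ⟨δ1, hδ1, hδ1c, happ⟩ := lm_left_approx hf hu0 hu1 (show (0:ℝ) < ε/8 by linarith)
  have hev : ∀ᶠ R : Finset ℝ in atTop,
      T - ε/8 < ∑ r ∈ R, (if (pre f r u ∧ P r) ∧ r ≠ u then xst f r u else 0) :=
    hTsum.hasSum.eventually (eventually_gt_nhds (show T - ε/8 < T by linarith))
  obtain ⟨R0, hR0⟩ := hev.exists
  set R1 := R0.filter (fun r => r < u) with hR1
  have hsumR1 : T - ε/8 < ∑ r ∈ R1, (if (pre f r u ∧ P r) ∧ r ≠ u then xst f r u else 0) := by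
    have heq : ∑ r ∈ R1, (if (pre f r u ∧ P r) ∧ r ≠ u then xst f r u else 0)
        = ∑ r ∈ R0, (if (pre f r u ∧ P r) ∧ r ≠ u then xst f r u else 0) := by
      apply Finset.sum_filter_of_ne
      intro x hx hne
      by_contra hc
      push_neg at hc
      apply hne
      rw [if_neg]
      intro hcc
      exact hcc.2 (le_antisymm hcc.1.1.1 hc)
    rw [heq]
    exact hR0
  have hex : ∃ v0, v0 < u ∧ ∀ r ∈ R1, r ≤ v0 := by
    rcases R1.eq_empty_or_nonempty with he | hne
    · exact ⟨u - δ1, by linarith, by rw [he]; simp⟩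
    · exact ⟨R1.max' hne, (Finset.mem_filter.1 (R1.max'_mem hne)).2, fun r hr => R1.le_max' r hr⟩
  obtain ⟨v0, hv0u, hv0⟩ := hex
  refine ⟨min δ1 (u - v0), lt_min hδ1 (by linarith), ?_⟩
  intro w hw hwd
  have hwu : w < u := mem_Iio.1 hw
  have hwl : u - min δ1 (u - v0) < w := by
    rw [Real.dist_eq, abs_of_nonpos (by linarith)] at hwd; linarith
  have hminδ : min δ1 (u - v0) ≤ δ1 := min_le_left _ _
  have hw1 : w ≤ 1 := hwu.le.trans hu1
  have hw0 : 0 ≤ w := by linarith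
  have hwIcc : w ∈ Icc (0:ℝ) 1 := ⟨hw0, hw1⟩
  have hlow : T - ε/8 < Jgen f P w := by
    have hterm : ∀ r ∈ R1, (if (pre f r u ∧ P r) ∧ r ≠ u then xst f r u else 0)
        ≤ (if pre f r w ∧ P r then xst f r w else 0) := by
      intro r hr
      by_cases hc : (pre f r u ∧ P r) ∧ r ≠ u
      · have hrw : r ≤ w := by
          have h1 := hv0 r hr
          have h2 := min_le_right δ1 (u - v0)
          linarith
        have hinfm : infIcc f r u ≤ infIcc f r w := infIcc_mono hf le_rfl hwu.le hrw
        have hprew : pre f r w := ⟨hrw, hc.1.1.2.trans hinfm⟩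
        rw [if_pos hc, if_pos ⟨hprew, hc.1.2⟩]
        simp only [xst]
        rw [if_pos hc.1.1.1, if_pos hrw]
        exact max_le_max (by linarith) le_rfl
      · rw [if_neg hc]
        exact Jgen_summand_nonneg f P w r
    have h1 := Finset.sum_le_sum hterm
    have h2 : ∑ r ∈ R1, (if pre f r w ∧ P r then xst f r w else 0) ≤ Jgen f P w :=
      Summable.sum_le_tsum R1 (fun r _ => Jgen_summand_nonneg f P w r) (summable_Jgen hf hwIcc P)
    linarith
  have hhigh : Jgen f P w ≤ T + (f w - infIcc f w u) := by
    apply Summable.tsum_le_of_sum_le (summable_Jgen hf hwIcc P)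
    intro R
    have h1 := Finset.sum_le_sum (fun r (_ : r ∈ R) => per_term_gen hf hwu P r)
    rw [Finset.sum_add_distrib] at h1
    have h2 : ∑ r ∈ R, (if (pre f r u ∧ P r) ∧ r ≠ u then xst f r u else 0) ≤ T :=
      Summable.sum_le_tsum R (fun r _ => by
        split
        · exact xst_nonneg f r u
        · exact le_rfl) hTsum
    have h3 := phi_sum_le hf (c := infIcc f w u) hw1
      (infIcc_le hf ⟨le_rfl, hwu.le⟩) R
    linarith
  have hfw := (happ w (by linarith) hwu).1
  have hinf_lb : lm f u - ε/8 ≤ infIcc f w u := by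
    apply le_infIcc hwu.le
    intro v hv
    rcases eq_or_lt_of_le hv.2 with heq | hlt
    · rw [heq]
      have := lm_le_self hf u
      linarith
    · have h2 := (happ v (by linarith [hv.1]) hlt).1
      have := (abs_le.1 h2).1
      linarith
  have hband : f w - infIcc f w u ≤ ε/4 := by
    have := (abs_le.1 hfw).2
    linarith
  rw [Real.dist_eq, abs_lt]
  constructor
  · linarith
  · linarith

lemma tendsto_Jgen_right (hf : IsExcursion f) {u : ℝ} (hu0 : 0 ≤ u) (hu1 : u < 1)
    (P : ℝ → Prop) :
    Tendsto (Jgen f P) (𝓝[>] u) (𝓝 (Jgen f P u)) := by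
  classical
  rw [Metric.tendsto_nhdsWithin_nhds]
  intro ε hε
  have hten := hf.rightCont u ⟨hu0, hu1⟩
  rw [Metric.tendsto_nhdsWithin_nhds] at hten
  have hev : ∀ᶠ R : Finset ℝ in atTop,
      Jgen f P u - ε/4 < ∑ r ∈ R, (if pre f r u ∧ P r then xst f r u else 0) :=
    (summable_Jgen hf ⟨hu0, hu1.le⟩ P).hasSum.eventually
      (eventually_gt_nhds (show Jgen f P u - ε/4
        < ∑' r : ℝ, (if pre f r u ∧ P r then xst f r u else 0) by rw [← Jgen]; linarith))
  obtain ⟨R0, hR0⟩ := hev.exists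
  set ε' := ε/(4 * (R0.card + 1)) with hε'
  have hε'pos : 0 < ε' := by positivity
  obtain ⟨δ1, hδ1, hband⟩ := hten (min ε' (ε/8)) (lt_min hε'pos (by linarith))
  refine ⟨min δ1 ((1 - u)/2), lt_min hδ1 (by linarith), ?_⟩
  intro w hw hwd
  have hwu : u < w := mem_Ioi.1 hw
  rw [Real.dist_eq, abs_of_nonneg (by linarith)] at hwd
  have hw1 : w ≤ 1 := by
    have := min_le_right δ1 ((1 - u)/2)
    linarith
  have hwIcc : w ∈ Icc (0:ℝ) 1 := ⟨hu0.trans hwu.le, hw1⟩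
  have hbandv : ∀ v, u < v → v ≤ w → |f v - f u| ≤ min ε' (ε/8) := by
    intro v hv1 hv2
    have h1 := hten
    have hd1 : dist v u < δ1 := by
      rw [Real.dist_eq, abs_of_nonneg (by linarith)]
      have := min_le_left δ1 ((1 - u)/2)
      linarith
    have := hband (mem_Ioi.2 hv1) hd1
    rw [Real.dist_eq] at this
    exact this.le
  have hc'lb : f u - min ε' (ε/8) ≤ infIcc f u w := by
    apply le_infIcc hwu.le
    intro v hv
    rcases eq_or_lt_of_le hv.1 with heq | hlt
    · rw [← heq]
      have := lt_min hε'pos (show (0:ℝ) < ε/8 by linarith)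
      linarith
    · have := (abs_le.1 (hbandv v hlt hv.2)).1
      linarith
  have hup : Jgen f P w ≤ Jgen f P u + (f w - infIcc f u w) := by
    apply Summable.tsum_le_of_sum_le (summable_Jgen hf hwIcc P)
    intro R
    have hterm : ∀ r ∈ R, (if pre f r w ∧ P r then xst f r w else 0)
        ≤ (if pre f r u ∧ P r then xst f r u else 0)
          + (if u < r ∧ pre f r w then xst f r w else 0) := by
      intro r _
      have hnn1 := Jgen_summand_nonneg f P u r
      have hnn2 : 0 ≤ (if u < r ∧ pre f r w then xst f r w else 0) := by
        split
        · exact xst_nonneg f r w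
        · exact le_rfl
      by_cases hp : pre f r w ∧ P r
      · rcases le_or_gt r u with hru | hru
        · have hinf : infIcc f r w ≤ infIcc f r u := infIcc_mono hf le_rfl hwu.le hru
          have hpu : pre f r u := ⟨hru, hp.1.2.trans hinf⟩
          rw [if_pos hp, if_pos ⟨hpu, hp.2⟩]
          have hxle : xst f r w ≤ xst f r u := by
            simp only [xst]
            rw [if_pos hp.1.1, if_pos hru]
            exact max_le_max (by linarith) le_rfl
          linarith
        · have e : (if u < r ∧ pre f r w then xst f r w else 0) = xst f r w :=
            if_pos ⟨hru, hp.1⟩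
          rw [if_pos hp, e]
          linarith
      · rw [if_neg hp]
        linarith
    have h1 := Finset.sum_le_sum hterm
    rw [Finset.sum_add_distrib] at h1
    have h2 := Summable.sum_le_tsum R (fun r _ => Jgen_summand_nonneg f P u r)
      (summable_Jgen hf ⟨hu0, hu1.le⟩ P)
    have hJu : Jgen f P u = ∑' r : ℝ, (if pre f r u ∧ P r then xst f r u else 0) := rfl
    have h3 : ∑ r ∈ R, (if u < r ∧ pre f r w then xst f r w else 0) ≤ f w - infIcc f u w := by
      have hfe : ∑ r ∈ R, (if u < r ∧ pre f r w then xst f r w else 0)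
          = ∑ r ∈ R.filter (fun r => u < r ∧ pre f r w), xst f r w :=
        (Finset.sum_filter _ _).symm
      rw [hfe]
      have h4 := chain_bound hf hu0 hw1 hwu.le (R.filter (fun r => u < r ∧ pre f r w))
        (fun r hr => by
          rw [Finset.mem_filter] at hr
          exact ⟨hr.2.1, hr.2.2.1⟩)
      linarith
    linarith
  have hlowterm : ∀ r ∈ R0,
      (if pre f r u ∧ P r then xst f r u else 0) - max (f u - infIcc f u w) 0
      ≤ (if pre f r w ∧ P r then xst f r w else 0) := by
    intro r _
    have hmaxnn := le_max_right (f u - infIcc f u w) (0:ℝ)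
    by_cases hp : pre f r u ∧ P r
    · rw [if_pos hp]
      have hA : infIcc f r w = min (infIcc f r u) (infIcc f u w) :=
        infIcc_split hf hp.1.1 hwu.le
      have hAfu : infIcc f r u ≤ f u := infIcc_le hf ⟨hp.1.1, le_rfl⟩
      by_cases hpw : pre f r w ∧ P r
      · rw [if_pos hpw, xst_of_pre hf hp.1, xst, if_pos (hp.1.1.trans hwu.le), hA]
        rcases le_total (infIcc f r u) (infIcc f u w) with h | h
        · rw [min_eq_left h]
          have h5 := le_max_left (infIcc f r u - lm f r) (0:ℝ)
          linarith
        · rw [min_eq_right h]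
          have h5 := le_max_left (infIcc f u w - lm f r) (0:ℝ)
          have h6 := le_max_left (f u - infIcc f u w) (0:ℝ)
          linarith
      · rw [if_neg hpw]
        have hcl : infIcc f r w < lm f r := by
          by_contra hc; push_neg at hc
          exact hpw ⟨⟨hp.1.1.trans hwu.le, hc⟩, hp.2⟩
        rw [hA] at hcl
        have hLA := hp.1.2
        have hc' : infIcc f u w < lm f r := by
          rcases le_total (infIcc f r u) (infIcc f u w) with h | h
          · rw [min_eq_left h] at hcl; linarith
          · rw [min_eq_right h] at hcl; exact hcl
        rw [xst_of_pre hf hp.1]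
        have h6 := le_max_left (f u - infIcc f u w) (0:ℝ)
        linarith
    · rw [if_neg hp]
      have h0 := Jgen_summand_nonneg f P w r
      linarith
  have hlow : Jgen f P u - ε/4 - R0.card * max (f u - infIcc f u w) 0 ≤ Jgen f P w := by
    have h1 := Finset.sum_le_sum hlowterm
    rw [Finset.sum_sub_distrib, Finset.sum_const, nsmul_eq_mul] at h1
    have h2 := Summable.sum_le_tsum R0 (fun r _ => Jgen_summand_nonneg f P w r)
      (summable_Jgen hf hwIcc P)
    have hJw : Jgen f P w = ∑' r : ℝ, (if pre f r w ∧ P r then xst f r w else 0) := rfl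
    linarith [hR0]
  have hmax : max (f u - infIcc f u w) 0 ≤ ε' := by
    have h1 : f u - infIcc f u w ≤ min ε' (ε/8) := by linarith [hc'lb]
    exact max_le (h1.trans (min_le_left _ _)) hε'pos.le
  have hfwb := hbandv w hwu le_rfl
  have hband2 : f w - infIcc f u w ≤ ε/4 := by
    have h1 := (abs_le.1 hfwb).2
    have h2 := min_le_right ε' (ε/8)
    have h3 := min_le_left ε' (ε/8)
    have h4 := (min_le_left ε' (ε/8)).trans (le_refl ε')
    have h5 : f u - infIcc f u w ≤ ε/8 := by
      have := hc'lb
      linarith [min_le_right ε' (ε/8)]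
    linarith
  have hcard : (R0.card : ℝ) * ε' ≤ ε/4 := by
    rw [hε', ← mul_div_assoc, div_le_div_iff₀ (by positivity) (by norm_num)]
    nlinarith [hε.le, Nat.cast_nonneg (α := ℝ) R0.card]
  have hcardmax : (R0.card : ℝ) * max (f u - infIcc f u w) 0 ≤ (R0.card : ℝ) * ε' :=
    mul_le_mul_of_nonneg_left hmax (Nat.cast_nonneg _)
  rw [Real.dist_eq, abs_lt]
  constructor
  · linarith
  · linarith
end Jgen2

section Jgen3
variable {P : ℝ → Prop}

lemma jump_of_neg (hf : IsExcursion f) {t : ℝ} (ht : t < 0) : jump f t = 0 := by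
  rw [jump, lm_of_neg hf ht,
    hf.zero_outside t (by simp only [mem_Icc, not_and_or, not_le]; left; exact ht)]
  ring

lemma jump_of_gt_one (hf : IsExcursion f) {t : ℝ} (ht : 1 < t) : jump f t = 0 := by
  rw [jump, lm_of_gt_one hf ht,
    hf.zero_outside t (by simp only [mem_Icc, not_and_or, not_le]; right; exact ht)]
  ring

lemma lm_Jgen (hf : IsExcursion f) (P : ℝ → Prop) (u : ℝ) :
    lm (Jgen f P) u = Jgen f P u - (if P u then jump f u else 0) := by
  rcases lt_trichotomy u 0 with h | h | h
  · rw [lm, if_neg h.ne, Jgen_of_neg hf P h, jump_of_neg hf h]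
    have hL : Function.leftLim (Jgen f P) u = 0 := by
      apply leftLim_eq_of_tendsto
      apply Tendsto.congr' _ (tendsto_const_nhds (α := ℝ) (x := (0:ℝ)))
      filter_upwards [self_mem_nhdsWithin] with v hv
      exact (Jgen_of_neg hf P ((mem_Iio.1 hv).trans h)).symm
    rw [hL]
    split <;> ring
  · subst h
    rw [lm, if_pos rfl, Jgen_zero hf P, jump]
    rw [lm, if_pos rfl]
    split <;> ring
  · rcases le_or_gt u 1 with h1 | h1
    · rw [lm, if_neg h.ne']
      exact leftLim_eq_of_tendsto (tendsto_Jgen_left hf h h1 P)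
    · rw [lm, if_neg h.ne', Jgen_of_ge_one hf P h1.le, jump_of_gt_one hf h1]
      have : Function.leftLim (Jgen f P) u = 0 := by
        apply leftLim_eq_of_tendsto
        apply Tendsto.congr' _ (tendsto_const_nhds (α := ℝ) (x := (0:ℝ)))
        filter_upwards [Ioo_mem_nhdsLT_of_mem ⟨h1, le_rfl⟩] with v hv
        exact (Jgen_of_ge_one hf P hv.1.le).symm
      rw [this]
      split <;> ring

lemma jump_Jgen (hf : IsExcursion f) (P : ℝ → Prop) (u : ℝ) :
    jump (Jgen f P) u = if P u then jump f u else 0 := by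
  rw [jump, lm_Jgen hf P u]
  ring

lemma IsExcursion_Jgen (hf : IsExcursion f) (P : ℝ → Prop) : IsExcursion (Jgen f P) := by
  constructor
  · exact fun t _ => Jgen_nonneg f P t
  · intro t ht
    rcases lt_or_ge t 0 with h | h
    · exact Jgen_of_neg hf P h
    · refine Jgen_of_ge_one hf P ?_
      by_contra hc
      push_neg at hc
      exact ht ⟨h, hc.le⟩
  · intro t ht
    exact tendsto_Jgen_right hf ht.1 ht.2 P
  · intro t ht
    have h := tendsto_Jgen_left hf ht.1 ht.2 P
    rwa [leftLim_eq_of_tendsto h]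
  · exact Jgen_of_ge_one hf P le_rfl
  · intro t ht
    rw [jump_Jgen hf P t]
    split
    · exact hf.jump_nonneg t ht
    · exact le_rfl

lemma infJgen_ge (hf : IsExcursion f) {r b : ℝ} (hr : r ∈ Icc (0:ℝ) 1)
    (hb : b ∈ Icc (0:ℝ) 1) (hpre : pre f r b) (P : ℝ → Prop) :
    lm (Jgen f P) r + (if P r then xst f r b else 0) ≤ infIcc (Jgen f P) r b := by
  apply le_infIcc hpre.1
  intro v hv
  have hprev : pre f r v := pre_mono_right hf hpre hv.1 hv.2
  have hKI := KI1gen hf hr (mem_Icc01_of_between hr hb hv) hprev P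
  have hps := preSumGen_nonneg f P r v
  rw [lm_Jgen hf]
  have hxm : (if P r then xst f r b else 0) ≤ (if P r then xst f r v else 0) := by
    by_cases h : P r
    · rw [if_pos h, if_pos h]
      simp only [xst]
      rw [if_pos hpre.1, if_pos hprev.1]
      exact max_le_max (by linarith [infIcc_mono hf le_rfl hv.2 hv.1]) le_rfl
    · rw [if_neg h, if_neg h]
  linarith

lemma infJgen_le (hf : IsExcursion f) {r b : ℝ} (hr : r ∈ Icc (0:ℝ) 1)
    (hb : b ∈ Icc (0:ℝ) 1) (hrb : r < b) (P : ℝ → Prop) :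
    infIcc (Jgen f P) r b ≤ lm (Jgen f P) r + (if P r then xst f r b else 0) := by
  apply le_of_forall_pos_le_add
  intro ε hε
  have hgap : (0:ℝ) < ε/4 := by linarith
  set e := infIcc f r b + ε/4 with he
  have hne : ∃ u ∈ Icc r b, f u < e := exists_lt_of_infIcc_lt hrb.le (by rw [he]; linarith)
  obtain ⟨u1, hu1mem, ⟨hu1lm, hafter⟩, hub⟩ := last_cross hf hr.1 hb.2 hrb.le hne
  have hu1r : r < u1 := by
    rcases eq_or_lt_of_le hu1mem.1 with heq | h
    swap
    · exact h
    exfalso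
    have hall : ∀ v, r < v → v ≤ b → e < f v := fun v h1 h2 =>
      (hafter v (by rw [← heq]; exact h1) h2).1
    have hfr : min (f r) e ≤ infIcc f r b := le_infIcc hrb.le (fun v hv => by
      rcases eq_or_lt_of_le hv.1 with heq2 | hlt2
      · rw [← heq2]; exact min_le_left _ _
      · exact (min_le_right _ _).trans (hall v hlt2 hv.2).le)
    have hinf_lt : infIcc f r b < e := by rw [he]; linarith
    have hfreq : f r ≤ infIcc f r b := by
      rcases le_total (f r) e with h' | h'
      · rw [min_eq_left h'] at hfr; exact hfr
      · rw [min_eq_right h'] at hfr; linarith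
    have hten := hf.rightCont r ⟨hr.1, lt_of_lt_of_le hrb hb.2⟩
    have hge : e ≤ f r := ge_of_tendsto hten (Filter.eventually_of_mem
      (Ioc_mem_nhdsGT_of_mem ⟨le_rfl, hrb⟩) fun v hv => (hall v hv.1 hv.2).le)
    linarith
  obtain ⟨u0, hu0mem, hu0e⟩ := hne
  have hu0le : u0 ≤ u1 := hub u0 hu0mem ((min_le_left _ _).trans hu0e.le)
  have hinfru1 : infIcc f r u1 < e :=
    lt_of_le_of_lt (infIcc_le hf ⟨hu0mem.1, hu0le⟩) hu0e
  have hu1Icc : u1 ∈ Icc (0:ℝ) 1 := mem_Icc01_of_between hr hb hu1mem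
  have hu10 : 0 < u1 := lt_of_le_of_lt hr.1 hu1r
  -- three-way split of the strict-ancestor sum at u1
  have hid : ∀ r' : ℝ, (if (pre f r' u1 ∧ P r') ∧ r' ≠ u1 then xst f r' u1 else 0)
      = (if (pre f r' u1 ∧ P r') ∧ r' ≠ u1 ∧ r' < r then xst f r' u1 else 0)
        + ((if r' = r then (if pre f r u1 ∧ P r then xst f r u1 else 0) else 0)
        + (if (pre f r' u1 ∧ P r') ∧ r' ≠ u1 ∧ r < r' then xst f r' u1 else 0)) := by
    intro r'
    rcases lt_trichotomy r' r with h | h | h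
    · rw [if_neg (show ¬ r' = r from h.ne),
        if_neg (show ¬((pre f r' u1 ∧ P r') ∧ r' ≠ u1 ∧ r < r') from
          fun hc => absurd hc.2.2 (not_lt.2 h.le))]
      by_cases hc : (pre f r' u1 ∧ P r') ∧ r' ≠ u1
      · rw [if_pos hc, if_pos ⟨hc.1, hc.2, h⟩]; ring
      · rw [if_neg hc, if_neg (fun hcc => hc ⟨hcc.1, hcc.2.1⟩)]; ring
    · subst h
      rw [if_pos rfl,
        if_neg (show ¬((pre f r' u1 ∧ P r') ∧ r' ≠ u1 ∧ r' < r') from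
          fun hc => lt_irrefl r' hc.2.2)]
      have hne1 : r' ≠ u1 := hu1r.ne
      by_cases hc : pre f r' u1 ∧ P r'
      · rw [if_pos hc, if_pos ⟨hc, hne1⟩]; ring
      · rw [if_neg hc, if_neg (fun hcc => hc hcc.1)]; ring
    · rw [if_neg (show ¬ r' = r from h.ne'),
        if_neg (show ¬((pre f r' u1 ∧ P r') ∧ r' ≠ u1 ∧ r' < r) from
          fun hc => absurd hc.2.2 (not_lt.2 h.le))]
      by_cases hc : (pre f r' u1 ∧ P r') ∧ r' ≠ u1
      · rw [if_pos hc, if_pos ⟨hc.1, hc.2, h⟩]; ring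
      · rw [if_neg hc, if_neg (fun hcc => hc ⟨hcc.1, hcc.2.1⟩)]; ring
  have hsum1 : Summable (fun r' : ℝ =>
      if (pre f r' u1 ∧ P r') ∧ r' ≠ u1 ∧ r' < r then xst f r' u1 else 0) := by
    apply Summable.of_nonneg_of_le _ _ (summable_Jgen hf hu1Icc P)
    · intro r'; split
      · exact xst_nonneg f r' u1
      · exact le_rfl
    · intro r'
      by_cases hc : (pre f r' u1 ∧ P r') ∧ r' ≠ u1 ∧ r' < r
      · rw [if_pos hc, if_pos hc.1]
      · rw [if_neg hc]; exact Jgen_summand_nonneg f P u1 r'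
  have hsum2 : Summable (fun r' : ℝ =>
      if r' = r then (if pre f r u1 ∧ P r then xst f r u1 else 0) else 0) :=
    (hasSum_ite_eq r _).summable
  have hsum3 : Summable (fun r' : ℝ =>
      if (pre f r' u1 ∧ P r') ∧ r' ≠ u1 ∧ r < r' then xst f r' u1 else 0) := by
    apply Summable.of_nonneg_of_le _ _ (summable_Jgen hf hu1Icc P)
    · intro r'; split
      · exact xst_nonneg f r' u1
      · exact le_rfl
    · intro r'
      by_cases hc : (pre f r' u1 ∧ P r') ∧ r' ≠ u1 ∧ r < r'
      · rw [if_pos hc, if_pos hc.1]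
      · rw [if_neg hc]; exact Jgen_summand_nonneg f P u1 r'
  have hlmu1 : lm (Jgen f P) u1
      = (∑' r' : ℝ, (if (pre f r' u1 ∧ P r') ∧ r' ≠ u1 ∧ r' < r then xst f r' u1 else 0))
        + ((if pre f r u1 ∧ P r then xst f r u1 else 0)
        + (∑' r' : ℝ, (if (pre f r' u1 ∧ P r') ∧ r' ≠ u1 ∧ r < r' then xst f r' u1 else 0))) := by
    rw [lm_Jgen hf, Jgen_split_top hf hu1Icc P]
    have h0 : (if P u1 then jump f u1 else 0)
        + (∑' r' : ℝ, (if (pre f r' u1 ∧ P r') ∧ r' ≠ u1 then xst f r' u1 else 0))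
        - (if P u1 then jump f u1 else 0)
        = ∑' r' : ℝ, (if (pre f r' u1 ∧ P r') ∧ r' ≠ u1 then xst f r' u1 else 0) := by ring
    rw [h0, tsum_congr hid, Summable.tsum_add hsum1 (hsum2.add hsum3), Summable.tsum_add hsum2 hsum3,
      tsum_ite_eq]
  -- bound the three pieces
  have hbound1 : (∑' r' : ℝ, (if (pre f r' u1 ∧ P r') ∧ r' ≠ u1 ∧ r' < r then xst f r' u1 else 0))
      ≤ lm (Jgen f P) r := by
    have hlmr : lm (Jgen f P) r
        = ∑' r' : ℝ, (if (pre f r' r ∧ P r') ∧ r' ≠ r then xst f r' r else 0) := by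
      rw [lm_Jgen hf, Jgen_split_top hf hr P]; ring
    rw [hlmr]
    apply Summable.tsum_le_tsum _ hsum1 (summable_Jgen' hf hr P)
    intro r'
    by_cases hc : (pre f r' u1 ∧ P r') ∧ r' ≠ u1 ∧ r' < r
    · have hpre' : pre f r' r :=
        ⟨hc.2.2.le, hc.1.1.2.trans (infIcc_mono hf le_rfl hu1r.le hc.2.2.le)⟩
      rw [if_pos hc, if_pos ⟨⟨hpre', hc.1.2⟩, hc.2.2.ne⟩]
      simp only [xst]
      rw [if_pos hc.1.1.1, if_pos hc.2.2.le]
      exact max_le_max (by linarith [infIcc_mono hf le_rfl hu1r.le hc.2.2.le]) le_rfl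
    · rw [if_neg hc]
      split
      · exact xst_nonneg f r' r
      · exact le_rfl
  have hbound2 : (if pre f r u1 ∧ P r then xst f r u1 else 0)
      ≤ (if P r then xst f r b else 0) + ε/4 := by
    by_cases hc : pre f r u1 ∧ P r
    · rw [if_pos hc, if_pos hc.2]
      have h1 : xst f r u1 ≤ max (infIcc f r b + ε/4 - lm f r) 0 := by
        rw [xst, if_pos hc.1.1]
        apply max_le_max _ le_rfl
        rw [← he]
        linarith [hinfru1]
      have h2 : max (infIcc f r b + ε/4 - lm f r) 0 ≤ max (infIcc f r b - lm f r) 0 + ε/4 := by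
        apply max_le
        · linarith [le_max_left (infIcc f r b - lm f r) (0:ℝ)]
        · linarith [le_max_right (infIcc f r b - lm f r) (0:ℝ)]
      have e3 : xst f r b = max (infIcc f r b - lm f r) 0 := by rw [xst, if_pos hrb.le]
      linarith
    · rw [if_neg hc]
      have h0 : 0 ≤ (if P r then xst f r b else 0) := by
        split
        · exact xst_nonneg f r b
        · exact le_rfl
      linarith
  have hbound3 : (∑' r' : ℝ, (if (pre f r' u1 ∧ P r') ∧ r' ≠ u1 ∧ r < r' then xst f r' u1 else 0))
      ≤ ε/4 := by
    have h1 : (∑' r' : ℝ, (if (pre f r' u1 ∧ P r') ∧ r' ≠ u1 ∧ r < r' then xst f r' u1 else 0))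
        ≤ lm f u1 - infIcc f r u1 := by
      apply Summable.tsum_le_of_sum_le hsum3
      intro R
      classical
      have hfe : ∑ r' ∈ R, (if (pre f r' u1 ∧ P r') ∧ r' ≠ u1 ∧ r < r' then xst f r' u1 else 0)
          = ∑ r' ∈ R.filter (fun r' => (pre f r' u1 ∧ P r') ∧ r' ≠ u1 ∧ r < r'), xst f r' u1 :=
        (Finset.sum_filter _ _).symm
      rw [hfe]
      have h2 := chain_aux hf hu1Icc.2
        (R.filter (fun r' => (pre f r' u1 ∧ P r') ∧ r' ≠ u1 ∧ r < r'))
        (fun r' hr' => by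
          rw [Finset.mem_filter] at hr'
          exact ⟨hr'.2.2.2, hr'.2.1.1.1, hr'.2.1.1.2⟩)
        u1 le_rfl hu1r hu1Icc.2
        (fun r' hr' => by
          rw [Finset.mem_filter] at hr'
          exact lt_of_le_of_ne hr'.2.1.1.1 hr'.2.2.1)
      linarith
    have h2 : infIcc f r b ≤ infIcc f r u1 := infIcc_mono hf le_rfl hu1mem.2 hu1r.le
    have h3 : lm f u1 ≤ e := hu1lm
    rw [he] at h3
    linarith
  have hinfle : infIcc (Jgen f P) r b ≤ lm (Jgen f P) u1 := by
    have hten : Tendsto (Jgen f P) (𝓝[<] u1) (𝓝 (lm (Jgen f P) u1)) := by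
      rw [lm_Jgen hf]
      exact tendsto_Jgen_left hf hu10 hu1Icc.2 P
    exact ge_of_tendsto hten (Filter.eventually_of_mem
      (Ioo_mem_nhdsLT_of_mem ⟨hu1r, le_rfl⟩)
      fun v hv => infIcc_le' (Jgen_nonneg f P) ⟨hv.1.le, hv.2.le.trans hu1mem.2⟩)
  rw [hlmu1] at hinfle
  linarith

lemma xst_Jgen (hf : IsExcursion f) (P : ℝ → Prop) {b : ℝ} (hb : b ∈ Icc (0:ℝ) 1) (r : ℝ) :
    xst (Jgen f P) r b = if P r then xst f r b else 0 := by
  have hexc := IsExcursion_Jgen hf P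
  rcases lt_or_ge r 0 with h | h
  · rw [xst_of_neg hexc h, xst_of_neg hf h]
    split <;> rfl
  rcases lt_or_ge (1:ℝ) r with h1 | h1
  · rw [xst_of_gt_one hexc h1, xst_of_gt_one hf h1]
    split <;> rfl
  have hr : r ∈ Icc (0:ℝ) 1 := ⟨h, h1⟩
  rcases le_or_gt r b with hrb | hrb
  swap
  · rw [xst_of_not_le (not_le.2 hrb), xst_of_not_le (not_le.2 hrb)]
    split <;> rfl
  rcases eq_or_lt_of_le hrb with heq | hlt
  · subst heq
    rw [xst_self hexc, xst_self hf, jump_Jgen hf P r]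
  by_cases hp : pre f r b
  · have hge := infJgen_ge hf hr hb hp P
    have hle := infJgen_le hf hr hb hlt P
    have heq2 : infIcc (Jgen f P) r b = lm (Jgen f P) r + (if P r then xst f r b else 0) :=
      le_antisymm hle hge
    rw [xst, if_pos hrb, heq2]
    have h0 : 0 ≤ (if P r then xst f r b else 0) := by
      split
      · exact xst_nonneg f r b
      · exact le_rfl
    rw [show lm (Jgen f P) r + (if P r then xst f r b else 0) - lm (Jgen f P) r
      = (if P r then xst f r b else 0) by ring, max_eq_left h0]
  · have hle := infJgen_le hf hr hb hlt P
    have hxz : xst f r b = 0 := xst_eq_zero_of_not_pre hp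
    have hiz : (if P r then xst f r b else 0) = 0 := by
      rw [hxz]; split <;> rfl
    rw [hiz] at hle ⊢
    rw [xst, if_pos hrb, max_eq_right (by linarith)]
end Jgen3

lemma cdel_self_zero (hf : IsExcursion f) (r a : ℝ) : cdel f r a a = 0 := by
  rw [cdel, sub_self, abs_zero, sub_zero]
  exact min_eq_left (jump_nn hf r)

lemma cdel_comm (f : ℝ → ℝ) (r a b : ℝ) : cdel f r a b = cdel f r b a := by
  rw [cdel, cdel, abs_sub_comm]

lemma cdel0_nonneg (hf : IsExcursion f) (r b : ℝ) : 0 ≤ cdel f r 0 (xst f r b) := by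
  rw [cdel, show |(0:ℝ) - xst f r b| = xst f r b from by
    rw [abs_sub_comm, sub_zero, abs_of_nonneg (xst_nonneg f r b)]]
  exact le_min (xst_nonneg f r b) (by linarith [xst_le_jump hf r b])

lemma cdel0_le (hf : IsExcursion f) (r b : ℝ) : cdel f r 0 (xst f r b) ≤ xst f r b := by
  rw [cdel, show |(0:ℝ) - xst f r b| = xst f r b from by
    rw [abs_sub_comm, sub_zero, abs_of_nonneg (xst_nonneg f r b)]]
  exact min_le_left _ _

lemma xst_eq_low (hf : IsExcursion f) {r m s : ℝ} (hrm : r < m) (hm1 : m ≤ 1)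
    (hms : pre f m s) : xst f r s = xst f r m := by
  have hinf : infIcc f r s = infIcc f r m := by
    rw [infIcc_split hf hrm.le hms.1]
    exact min_eq_left ((infIcc_le_lm hf hrm hm1).trans hms.2)
  simp only [xst]
  rw [if_pos (hrm.le.trans hms.1), if_pos hrm.le, hinf]

lemma dL_canon (hf : IsExcursion f) {s t : ℝ} (hs : s ∈ Icc (0:ℝ) 1)
    (ht : t ∈ Icc (0:ℝ) 1) :
    dL f s t = ∑' r : ℝ, cdel f r (xst f r s) (xst f r t) := by
  classical
  set m := mrca f s t with hm
  have hm01 := mrca_mem_Icc hf hs ht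
  have hpres : pre f m s := mrca_pre_left hf hs ht
  have hpret : pre f m t := mrca_pre_right hf hs ht
  have hid : ∀ r : ℝ, cdel f r (xst f r s) (xst f r t)
      = (if pre f m r ∧ m < r ∧ pre f r s then cdel f r 0 (xst f r s) else 0)
        + ((if pre f m r ∧ m < r ∧ pre f r t then cdel f r 0 (xst f r t) else 0)
        + (if r = m then cdel f m (xst f m s) (xst f m t) else 0)) := by
    intro r
    rcases lt_trichotomy r m with h | h | h
    · rw [if_neg (show ¬(pre f m r ∧ m < r ∧ pre f r s) from
          fun hc => absurd hc.1.1 (not_le.2 h)),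
        if_neg (show ¬(pre f m r ∧ m < r ∧ pre f r t) from
          fun hc => absurd hc.1.1 (not_le.2 h)),
        if_neg (show ¬ r = m from h.ne)]
      have h1 : xst f r s = xst f r m := xst_eq_low hf h hm01.2 hpres
      have h2 : xst f r t = xst f r m := xst_eq_low hf h hm01.2 hpret
      rw [h1, h2, cdel_self_zero hf]
      ring
    · rw [h,
        if_neg (show ¬(pre f m m ∧ m < m ∧ pre f m s) from fun hc => lt_irrefl m hc.2.1),
        if_neg (show ¬(pre f m m ∧ m < m ∧ pre f m t) from fun hc => lt_irrefl m hc.2.1),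
        if_pos rfl]
      ring
    · rw [if_neg (show ¬ r = m from h.ne')]
      by_cases hps : pre f r s
      · by_cases hpt : pre f r t
        · exact absurd (le_mrca (hm01.1.trans h.le) hps hpt) (not_le.2 h)
        · rw [if_pos (show pre f m r ∧ m < r ∧ pre f r s from
              ⟨pre_chain hf hpres hps h.le, h, hps⟩),
            if_neg (show ¬(pre f m r ∧ m < r ∧ pre f r t) from fun hc => hpt hc.2.2),
            xst_eq_zero_of_not_pre hpt, cdel_comm]
          ring
      · by_cases hpt : pre f r t
        · rw [if_neg (show ¬(pre f m r ∧ m < r ∧ pre f r s) from fun hc => hps hc.2.2),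
            if_pos (show pre f m r ∧ m < r ∧ pre f r t from
              ⟨pre_chain hf hpret hpt h.le, h, hpt⟩),
            xst_eq_zero_of_not_pre hps]
          ring
        · rw [if_neg (show ¬(pre f m r ∧ m < r ∧ pre f r s) from fun hc => hps hc.2.2),
            if_neg (show ¬(pre f m r ∧ m < r ∧ pre f r t) from fun hc => hpt hc.2.2),
            xst_eq_zero_of_not_pre hps, xst_eq_zero_of_not_pre hpt, cdel_self_zero hf]
          ring
  have hsA : Summable (fun r : ℝ =>
      if pre f m r ∧ m < r ∧ pre f r s then cdel f r 0 (xst f r s) else 0) := by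
    apply Summable.of_nonneg_of_le _ _ (summable_J hf hs)
    · intro r; split
      · exact cdel0_nonneg hf r s
      · exact le_rfl
    · intro r
      by_cases hc : pre f m r ∧ m < r ∧ pre f r s
      · rw [if_pos hc, if_pos hc.2.2]
        exact cdel0_le hf r s
      · rw [if_neg hc]
        split
        · exact xst_nonneg f r s
        · exact le_rfl
  have hsB : Summable (fun r : ℝ =>
      if pre f m r ∧ m < r ∧ pre f r t then cdel f r 0 (xst f r t) else 0) := by
    apply Summable.of_nonneg_of_le _ _ (summable_J hf ht)
    · intro r; split
      · exact cdel0_nonneg hf r t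
      · exact le_rfl
    · intro r
      by_cases hc : pre f m r ∧ m < r ∧ pre f r t
      · rw [if_pos hc, if_pos hc.2.2]
        exact cdel0_le hf r t
      · rw [if_neg hc]
        split
        · exact xst_nonneg f r t
        · exact le_rfl
  have hsC : Summable (fun r : ℝ =>
      if r = m then cdel f m (xst f m s) (xst f m t) else 0) :=
    (hasSum_ite_eq m _).summable
  have hRHS : (∑' r : ℝ, cdel f r (xst f r s) (xst f r t))
      = dO f m s + (dO f m t + cdel f m (xst f m s) (xst f m t)) := by
    rw [tsum_congr hid, Summable.tsum_add hsA (hsB.add hsC), Summable.tsum_add hsB hsC, tsum_ite_eq]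
    rfl
  rw [hRHS, dL, ← hm]
  ring

lemma dL_J (hf : IsExcursion f) {s t : ℝ} (hs : s ∈ Icc (0:ℝ) 1) (ht : t ∈ Icc (0:ℝ) 1) :
    dL f s t = dL (Jop f) s t := by
  have hPT : Jop f = Jgen f (fun _ => True) := Jop_eq_Jgen f
  have hexc : IsExcursion (Jop f) := by rw [hPT]; exact IsExcursion_Jgen hf _
  rw [dL_canon hf hs ht, dL_canon hexc hs ht]
  apply tsum_congr
  intro r
  rw [hPT, xst_Jgen hf _ hs r, xst_Jgen hf _ ht r, cdel, cdel, jump_Jgen hf _ r]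
  simp

lemma part2_eq (hf : IsExcursion f) {ε : ℝ} (hε : 0 < ε) {s t : ℝ}
    (hs : s ∈ Icc (0:ℝ) 1) (ht : t ∈ Icc (0:ℝ) 1) :
    dL (Jeps f ε) s t =
      ∑' r : Icc (0:ℝ) 1,
        if ε ≤ jump f r.1 then cdel f r.1 (xst f r.1 s) (xst f r.1 t) else 0 := by
  have hJe : Jeps f ε = Jgen f (fun r => ε ≤ jump f r) := Jeps_eq_Jgen f ε
  have hexc : IsExcursion (Jeps f ε) := by rw [hJe]; exact IsExcursion_Jgen hf _
  rw [dL_canon hexc hs ht,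
    tsum_subtype (Icc (0:ℝ) 1)
      (fun x : ℝ => if ε ≤ jump f x then cdel f x (xst f x s) (xst f x t) else 0)]
  apply tsum_congr
  intro r
  rw [Set.indicator_apply]
  by_cases hr01 : r ∈ Icc (0:ℝ) 1
  · rw [if_pos hr01, hJe, xst_Jgen hf _ hs r, xst_Jgen hf _ ht r, cdel, cdel,
      jump_Jgen hf _ r]
    by_cases hP : ε ≤ jump f r
    · simp [hP]
    · simp [hP, cdel]
  · rw [if_neg hr01]
    rcases lt_or_ge r 0 with h | h
    · rw [xst_of_neg hexc h, xst_of_neg hexc h, cdel]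
      have hj : jump (Jeps f ε) r = 0 := by
        rw [hJe, jump_Jgen hf _ r, jump_of_neg hf h]
        split <;> rfl
      rw [hj]
      simp
    · have h1 : 1 < r := by
        by_contra hc
        push_neg at hc
        exact hr01 ⟨h, hc⟩
      rw [xst_of_gt_one hexc h1, xst_of_gt_one hexc h1, cdel]
      have hj : jump (Jeps f ε) r = 0 := by
        rw [hJe, jump_Jgen hf _ r, jump_of_gt_one hf h1]
        split <;> rfl
      rw [hj]
      simp


theorem statement12 (f : ℝ → ℝ) (hf : IsExcursion f) (ε : ℝ) (hε : 0 < ε) :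
    (∀ s ∈ Icc (0:ℝ) 1, ∀ t ∈ Icc (0:ℝ) 1,
        dT f s t = dT (fun u => f u - Jop f u) s t ∧
        dT f s t = dcl (fun u => f u - Jop f u) s t ∧
        dL f s t = dL (Jop f) s t) ∧
    (∀ s ∈ Icc (0:ℝ) 1, ∀ t ∈ Icc (0:ℝ) 1,
        dL (Jeps f ε) s t =
          ∑' r : Icc (0:ℝ) 1,
            if ε ≤ jump f r.1 then cdel f r.1 (xst f r.1 s) (xst f r.1 t) else 0) := by
  constructor
  · intro s hs t ht
    exact ⟨dT_G hf hs ht, dT_eq_dcl hf hs ht, dL_J hf hs ht⟩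
  · intro s hs t ht
    exact part2_eq hf hε hs ht
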